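/- arXiv:2309.00508 — 7 statements merged into one kernel-verified Lean document; each statement's English description precedes it below -/
import Mathlib

section
/- Let (c_j)_{j≥0} be a real sequence such that for every N there exist an odd j_odd > N and an even j_even > N with c_{j_odd} ≠ 0 and c_{j_even} ≠ 0. Let p_1, …, p_r be distinct nonzero reals and α_1, …, α_r reals. If the power series ∑_{j≥0} c_j (∑_{k=1}^r α_k p_k^j) ε^j has only finitely many nonzero coefficients (i.e., is a polynomial in ε), then α_k = 0 for all k. -/
open Filter Finset

/-- A real constant equal to values of a null sequence along an infinite set is zero. -/
lemma aux_const_zero {S : Set ℕ} (hS : S.Infinite) {A : ℝ} {h : ℕ → ℝ}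
    (heq : ∀ j ∈ S, A = h j) (hh : Tendsto h atTop (nhds 0)) : A = 0 := by
  by_contra hA
  have hε : (0:ℝ) < |A| := abs_pos.2 hA
  have hev : ∀ᶠ j in atTop, |h j| < |A| := by
    have := hh.eventually (Metric.ball_mem_nhds (0:ℝ) hε)
    filter_upwards [this] with j hj
    simpa [Real.dist_eq] using hj
  obtain ⟨N, hN⟩ := eventually_atTop.1 hev
  obtain ⟨j, hjS, hjN⟩ := hS.exists_gt N
  have := hN j hjN.le
  rw [← heq j hjS] at this
  exact lt_irrefl _ this

lemma aux_key {r : ℕ} {p : Fin r → ℝ} (hp0 : ∀ k, p k ≠ 0) (hpinj : Function.Injective p)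
    {α : Fin r → ℝ}
    (hev : {j : ℕ | Even j ∧ (∑ k, α k * p k ^ j) = 0}.Infinite)
    (hod : {j : ℕ | Odd j ∧ (∑ k, α k * p k ^ j) = 0}.Infinite) :
    ∀ k, α k = 0 := by
  by_contra hcon
  push_neg at hcon
  obtain ⟨k', hk'⟩ := hcon
  set K : Finset (Fin r) := Finset.univ.filter (fun k => α k ≠ 0) with hKdef
  have hKne : K.Nonempty := ⟨k', by simp [hKdef, hk']⟩
  set M : ℝ := K.sup' hKne (fun k => |p k|) with hMdef
  obtain ⟨k0, hk0K, hk0⟩ := Finset.exists_mem_eq_sup' hKne (fun k => |p k|)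
  have hMpos : 0 < M := by rw [hMdef, hk0]; exact abs_pos.2 (hp0 k0)
  have hMle : ∀ k ∈ K, |p k| ≤ M := by
    intro k hk; rw [hMdef]; exact Finset.le_sup' (fun k => |p k|) hk
  -- restrict sums to K
  have hsumK : ∀ j : ℕ, (∑ k, α k * p k ^ j) = ∑ k ∈ K, α k * p k ^ j := by
    intro j
    refine (Finset.sum_subset (K.subset_univ) ?_).symm
    intro k _ hk
    have : α k = 0 := by by_contra h; exact hk (by simp [hKdef, h])
    simp [this]
  -- normalized vanishing
  have hnorm : ∀ j : ℕ, (∑ k, α k * p k ^ j) = 0 → (∑ k ∈ K, α k * (p k / M) ^ j) = 0 := by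
    intro j hj
    have : (∑ k ∈ K, α k * (p k / M) ^ j) = (∑ k ∈ K, α k * p k ^ j) / M ^ j := by
      rw [Finset.sum_div]
      exact Finset.sum_congr rfl fun k _ => by rw [div_pow, mul_div_assoc]
    rw [this, ← hsumK, hj, zero_div]
  set Kmax : Finset (Fin r) := K.filter (fun k => |p k| = M) with hKmax
  set Krest : Finset (Fin r) := K.filter (fun k => ¬ |p k| = M) with hKrest
  have hsplit : ∀ j : ℕ, (∑ k ∈ K, α k * (p k / M) ^ j)
      = (∑ k ∈ Kmax, α k * (p k / M) ^ j) + (∑ k ∈ Krest, α k * (p k / M) ^ j) :=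
    fun j => (Finset.sum_filter_add_sum_filter_not K _ _).symm
  have hpm : ∀ k ∈ Kmax, p k / M = 1 ∨ p k / M = -1 := by
    intro k hk
    have h1 : |p k| = M := (Finset.mem_filter.1 hk).2
    have : |p k / M| = 1 := by rw [abs_div, h1, abs_of_pos hMpos, div_self hMpos.ne']
    rcases abs_eq (by norm_num : (0:ℝ) ≤ 1) |>.1 this with h | h
    · exact Or.inl h
    · exact Or.inr h
  set h : ℕ → ℝ := fun j => -(∑ k ∈ Krest, α k * (p k / M) ^ j) with hhdef
  have hh0 : Tendsto h atTop (nhds 0) := by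
    rw [hhdef]
    have : Tendsto (fun j => ∑ k ∈ Krest, α k * (p k / M) ^ j) atTop (nhds 0) := by
      have key : Tendsto (fun j : ℕ => ∑ k ∈ Krest, α k * (p k / M) ^ j) atTop
          (nhds (∑ k ∈ Krest, (0:ℝ))) := by
        refine tendsto_finset_sum Krest fun k hk => ?_
        have hlt : |p k / M| < 1 := by
          obtain ⟨hkK, hkne⟩ := Finset.mem_filter.1 hk
          rw [abs_div, abs_of_pos hMpos, div_lt_one hMpos]
          exact lt_of_le_of_ne (hMle k hkK) hkne
        have := (tendsto_pow_atTop_nhds_zero_of_abs_lt_one hlt).const_mul (α k)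
        simpa using this
      simpa using key
    simpa using this.neg
  -- Aev = 0
  have hAev : (∑ k ∈ Kmax, α k) = 0 := by
    apply aux_const_zero hev _ hh0
    intro j hj
    obtain ⟨hje, hjsum⟩ := hj
    have h0 := hnorm j hjsum
    rw [hsplit j] at h0
    have h1 : (∑ k ∈ Kmax, α k * (p k / M) ^ j) = ∑ k ∈ Kmax, α k := by
      refine Finset.sum_congr rfl fun k hk => ?_
      rcases hpm k hk with h | h <;> rw [h]
      · rw [one_pow, mul_one]
      · rw [hje.neg_one_pow, mul_one]
    rw [h1] at h0
    rw [hhdef]; linarith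
  -- Aod = 0
  have hAod : (∑ k ∈ Kmax, α k * (p k / M)) = 0 := by
    apply aux_const_zero hod _ hh0
    intro j hj
    obtain ⟨hje, hjsum⟩ := hj
    have h0 := hnorm j hjsum
    rw [hsplit j] at h0
    have h1 : (∑ k ∈ Kmax, α k * (p k / M) ^ j) = ∑ k ∈ Kmax, α k * (p k / M) := by
      refine Finset.sum_congr rfl fun k hk => ?_
      rcases hpm k hk with h | h <;> rw [h]
      · rw [one_pow]
      · rw [hje.neg_one_pow]
    rw [h1] at h0
    rw [hhdef]; linarith
  -- combine to get α k0 = 0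
  have hk0max : k0 ∈ Kmax := Finset.mem_filter.2 ⟨hk0K, hk0.symm⟩
  have hB : (∑ k ∈ Kmax, α k * (1 + (p k0 / M) * (p k / M))) = 2 * α k0 := by
    rw [Finset.sum_eq_single_of_mem k0 hk0max]
    · have : p k0 / M = 1 ∨ p k0 / M = -1 := hpm k0 hk0max
      rcases this with h | h <;> rw [h] <;> ring
    · intro k hk hne
      have hk' : p k / M = 1 ∨ p k / M = -1 := hpm k hk
      have hk0' : p k0 / M = 1 ∨ p k0 / M = -1 := hpm k0 hk0max
      have hne' : p k / M ≠ p k0 / M := by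
        intro hcontra
        exact hne (hpinj (by field_simp at hcontra; exact hcontra))
      rcases hk' with h1 | h1 <;> rcases hk0' with h2 | h2
      · exact absurd (h1.trans h2.symm) hne'
      · rw [h1, h2]; ring
      · rw [h1, h2]; ring
      · exact absurd (h1.trans h2.symm) hne'
  have hB' : (∑ k ∈ Kmax, α k * (1 + (p k0 / M) * (p k / M))) = 0 := by
    have : (∑ k ∈ Kmax, α k * (1 + (p k0 / M) * (p k / M)))
        = (∑ k ∈ Kmax, α k) + (p k0 / M) * (∑ k ∈ Kmax, α k * (p k / M)) := by
      rw [Finset.mul_sum, ← Finset.sum_add_distrib]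
      exact Finset.sum_congr rfl fun k _ => by ring
    rw [this, hAev, hAod]; ring
  have : α k0 = 0 := by rw [hB'] at hB; linarith
  exact (Finset.mem_filter.1 hk0K).2 this

theorem stmt0 (c : ℕ → ℝ)
    (hc : ∀ N : ℕ, (∃ j, Odd j ∧ N < j ∧ c j ≠ 0) ∧ (∃ j, Even j ∧ N < j ∧ c j ≠ 0))
    (r : ℕ) (p : Fin r → ℝ) (hp0 : ∀ k, p k ≠ 0) (hpinj : Function.Injective p)
    (α : Fin r → ℝ)
    (hfin : {j : ℕ | c j * (∑ k, α k * p k ^ j) ≠ 0}.Finite) :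
    ∀ k, α k = 0 := by
  obtain ⟨b, hb⟩ := hfin.bddAbove
  have hzero : ∀ j, b < j → c j ≠ 0 → (∑ k, α k * p k ^ j) = 0 := by
    intro j hj hcj
    by_contra hne
    have : j ∈ {j : ℕ | c j * (∑ k, α k * p k ^ j) ≠ 0} := mul_ne_zero hcj hne
    exact absurd (hb this) (not_le.2 hj)
  have hinf : ∀ P : ℕ → Prop, (∀ N : ℕ, ∃ j, P j ∧ N < j ∧ c j ≠ 0) →
      {j : ℕ | P j ∧ (∑ k, α k * p k ^ j) = 0}.Infinite := by
    intro P hP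
    rw [Set.infinite_coe_iff.symm]
    rw [Set.infinite_coe_iff]
    by_contra hfin'
    rw [Set.not_infinite] at hfin'
    obtain ⟨b', hb'⟩ := hfin'.bddAbove
    obtain ⟨j, hjP, hjN, hcj⟩ := hP (max b b')
    have hj1 : b < j := lt_of_le_of_lt (le_max_left _ _) hjN
    have hj2 : b' < j := lt_of_le_of_lt (le_max_right _ _) hjN
    have : j ∈ {j : ℕ | P j ∧ (∑ k, α k * p k ^ j) = 0} := ⟨hjP, hzero j hj1 hcj⟩
    exact absurd (hb' this) (not_le.2 hj2)
  exact aux_key hp0 hpinj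
    (hinf Even fun N => (hc N).2)
    (hinf Odd fun N => (hc N).1)
end

section
/- Let σ : ℝ → ℝ be given on (−R, R) by a power series σ(x) = ∑_{j≥0} c_j x^j with c_0 ≠ 0 such that for every N there exist odd j_odd > N and even j_even > N with c_{j_odd} ≠ 0 and c_{j_even} ≠ 0 (a 'good activation'). Then for any r and any pairwise distinct w_1, …, w_r ∈ ℝ^d, the functions x ↦ σ(w_1·x), …, x ↦ σ(w_r·x) are linearly independent in the space of real functions on ℝ^d. -/
open Filter

lemma lemC (b : ℕ → ℝ) (ε : ℝ) (hε : 0 < ε)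
    (h : ∀ t : ℝ, |t| < ε → HasSum (fun j => b j * t ^ j) 0) : ∀ j, b j = 0 := by
  set p := FormalMultilinearSeries.ofScalars ℝ b with hp
  have hε2 : (0:ℝ) < ε / 2 := by linarith
  have habs : |ε / 2| < ε := by rw [abs_of_pos hε2]; linarith
  have hrad : ENNReal.ofReal (ε / 2) ≤ p.radius := by
    rw [ENNReal.ofReal]
    apply FormalMultilinearSeries.le_radius_of_isBigO
    have hs : Summable (fun j => b j * (ε / 2) ^ j) := (h (ε / 2) habs).summable
    have ht : Filter.Tendsto (fun j => b j * (ε / 2) ^ j) atTop (nhds 0) :=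
      hs.tendsto_atTop_zero
    have hO : (fun j => b j * (ε / 2) ^ j) =O[atTop] (fun _ => (1:ℝ)) :=
      ht.isBigO_one ℝ
    rw [← Asymptotics.isBigO_norm_left] at hO
    apply hO.congr_left
    intro n
    rw [Real.coe_toNNReal _ hε2.le, FormalMultilinearSeries.ofScalars_norm,
      Real.norm_eq_abs, abs_mul, abs_of_pos (pow_pos hε2 n), Real.norm_eq_abs]
  have hball : HasFPowerSeriesOnBall (0 : ℝ → ℝ) p 0 (ENNReal.ofReal (ε / 2)) := by
    refine ⟨hrad, by simpa using hε2, fun {y} hy => ?_⟩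
    have hy' : |y| < ε := by
      rw [EMetric.mem_ball, edist_zero_right, ← ofReal_norm,
        ENNReal.ofReal_lt_ofReal_iff hε2, Real.norm_eq_abs] at hy
      linarith
    have := h y hy'
    simp only [Pi.zero_apply, zero_add]
    convert this using 1
    · rfl
    funext n
    rw [FormalMultilinearSeries.ofScalars_apply_eq, smul_eq_mul]
  have hz : p = 0 := hball.hasFPowerSeriesAt.eq_zero
  intro j
  exact (FormalMultilinearSeries.ofScalars_eq_zero ℝ j).mp (by rw [← hp, hz]; rfl)

lemma lemA {d r : ℕ} (w : Fin r → EuclideanSpace ℝ (Fin d)) (hw : Function.Injective w) :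
    ∃ v : EuclideanSpace ℝ (Fin d),
      Function.Injective (fun k => (inner ℝ (w k) v : ℝ)) := by
  by_contra hcon
  push_neg at hcon
  have hcov : ⋃ q : {q : Fin r × Fin r // q.1 ≠ q.2},
      ((LinearMap.ker (innerSL ℝ (w q.1.1 - w q.1.2)).toLinearMap : Submodule ℝ
        (EuclideanSpace ℝ (Fin d))) : Set (EuclideanSpace ℝ (Fin d))) = Set.univ := by
    ext v
    simp only [Set.mem_iUnion, Set.mem_univ, iff_true, SetLike.mem_coe,
      LinearMap.mem_ker]
    obtain ⟨i, j, hij, hne⟩ := Function.not_injective_iff.mp (hcon v)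
    refine ⟨⟨(i, j), hne⟩, ?_⟩
    simp only [ContinuousLinearMap.coe_coe, innerSL_apply_apply, inner_sub_left]
    rw [hij, sub_self]
  obtain ⟨⟨⟨i, j⟩, hne⟩, htop⟩ := Subspace.exists_eq_top_of_iUnion_eq_univ hcov
  have htop' : LinearMap.ker (innerSL ℝ (w i - w j)).toLinearMap = ⊤ := htop
  have hmem : w i - w j ∈ LinearMap.ker (innerSL ℝ (w i - w j)).toLinearMap := by
    rw [htop']; trivial
  have h2 : (inner ℝ (w i - w j) (w i - w j) : ℝ) = 0 := LinearMap.mem_ker.mp hmem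
  have h3 : w i - w j = 0 := inner_self_eq_zero.mp h2
  exact hne (hw (sub_eq_zero.mp h3))

lemma seqLem (P : ℕ → Prop) (h : ∀ N, ∃ j, N < j ∧ P j) :
    ∃ e : ℕ → ℕ, StrictMono e ∧ ∀ n, P (e n) := by
  choose f hf1 hf2 using h
  refine ⟨fun n => Nat.rec (f 0) (fun _ ih => f ih) n,
    strictMono_nat_of_lt_succ (fun n => hf1 _), fun n => ?_⟩
  cases n with
  | zero => exact hf2 0
  | succ m => exact hf2 _

lemma lemD {r : ℕ} (lam a : Fin r → ℝ) (hlam : Function.Injective lam)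
    (h0 : ∑ k, a k = 0)
    (hE : ∀ N : ℕ, ∃ j, Even j ∧ N < j ∧ ∑ k, a k * lam k ^ j = 0)
    (hO : ∀ N : ℕ, ∃ j, Odd j ∧ N < j ∧ ∑ k, a k * lam k ^ j = 0) :
    ∀ k, a k = 0 := by
  by_contra hcon
  push_neg at hcon
  obtain ⟨k1, hk1⟩ := hcon
  set F := Finset.univ.filter (fun k => a k ≠ 0) with hF
  have hFne : F.Nonempty := ⟨k1, by simp [hF, hk1]⟩
  obtain ⟨k0, hk0F, hk0⟩ := Finset.exists_mem_eq_sup' hFne (fun k => |lam k|)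
  set M := F.sup' hFne (fun k => |lam k|) with hM
  have hle : ∀ k, a k ≠ 0 → |lam k| ≤ M := fun k hk =>
    Finset.le_sup' (f := fun k => |lam k|) (by simp [hF, hk] : k ∈ F)
  have hak0 : a k0 ≠ 0 := by
    have := Finset.mem_filter.mp hk0F
    exact this.2
  have hMabs : M = |lam k0| := hk0
  rcases eq_or_lt_of_le (abs_nonneg (lam k0)) with hMz | hMpos
  · -- M = 0 case
    have hlamk0 : lam k0 = 0 := abs_eq_zero.mp hMz.symm
    have hothers : ∀ k, k ≠ k0 → a k = 0 := by
      intro k hk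
      by_contra hak
      have h1 : |lam k| ≤ M := hle k hak
      rw [hMabs, ← hMz] at h1
      have : lam k = 0 := abs_eq_zero.mp (le_antisymm h1 (abs_nonneg _))
      exact hk (hlam (this.trans hlamk0.symm))
    have : ∑ k, a k = a k0 :=
      Finset.sum_eq_single_of_mem k0 (Finset.mem_univ k0)
        (fun k _ hk => hothers k hk)
    exact hak0 (this.symm.trans h0)
  · -- M > 0 case
    have hMpos' : 0 < M := by rw [hMabs]; exact hMpos
    obtain ⟨e, he_mono, he_prop⟩ := seqLem (fun j => Even j ∧ ∑ k, a k * lam k ^ j = 0)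
      (fun N => by obtain ⟨j, h1, h2, h3⟩ := hE N; exact ⟨j, h2, h1, h3⟩)
    obtain ⟨o, ho_mono, ho_prop⟩ := seqLem (fun j => Odd j ∧ ∑ k, a k * lam k ^ j = 0)
      (fun N => by obtain ⟨j, h1, h2, h3⟩ := hO N; exact ⟨j, h2, h1, h3⟩)
    have key : ∀ (s : ℕ → ℕ), StrictMono s → (∀ n, ∑ k, a k * lam k ^ (s n) = 0) →
        ∀ (g : Fin r → ℝ),
        (∀ k, a k ≠ 0 → Tendsto (fun n => (lam k / M) ^ (s n)) atTop (nhds (g k))) →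
        ∑ k, a k * g k = 0 := by
      intro s hs hz g hg
      have hzero : ∀ n, ∑ k, a k * (lam k / M) ^ (s n) = 0 := by
        intro n
        have : ∑ k, a k * (lam k / M) ^ (s n)
            = (∑ k, a k * lam k ^ (s n)) / M ^ (s n) := by
          rw [Finset.sum_div]
          congr 1; funext k
          rw [div_pow, mul_div_assoc]
        rw [this, hz n, zero_div]
      have htend : Tendsto (fun n => ∑ k, a k * (lam k / M) ^ (s n)) atTop
          (nhds (∑ k, a k * g k)) := by
        apply tendsto_finset_sum
        intro k _
        by_cases hak : a k = 0
        · simpa [hak] using (tendsto_const_nhds :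
            Tendsto (fun _ : ℕ => (0:ℝ)) atTop (nhds 0))
        · exact (hg k hak).const_mul (a k)
      have h1 : (fun n => ∑ k, a k * (lam k / M) ^ (s n)) = fun _ => (0:ℝ) :=
        funext hzero
      rw [h1] at htend
      exact tendsto_nhds_unique htend tendsto_const_nhds
    have hlims : ∀ (s : ℕ → ℕ), StrictMono s → (∀ k, a k ≠ 0 →
        ∀ pm : ℝ, lam k = pm * M → pm = 1 ∨ pm = -1 → True) → True := fun _ _ _ => trivial
    clear hlims
    have hEtend : ∀ k, a k ≠ 0 → Tendsto (fun n => (lam k / M) ^ (e n)) atTop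
        (nhds (if lam k = M then 1 else if lam k = -M then 1 else 0)) := by
      intro k hak
      by_cases h1 : lam k = M
      · rw [if_pos h1]
        have : ∀ n, (lam k / M) ^ (e n) = 1 := fun n => by
          rw [h1, div_self hMpos'.ne', one_pow]
        simpa [funext this] using (tendsto_const_nhds :
          Tendsto (fun _ : ℕ => (1:ℝ)) atTop (nhds 1))
      · by_cases h2 : lam k = -M
        · rw [if_neg h1, if_pos h2]
          have : ∀ n, (lam k / M) ^ (e n) = 1 := fun n => by
            rw [h2, neg_div, div_self hMpos'.ne']
            exact (he_prop n).1.neg_one_pow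
          simpa [funext this] using (tendsto_const_nhds :
            Tendsto (fun _ : ℕ => (1:ℝ)) atTop (nhds 1))
        · rw [if_neg h1, if_neg h2]
          have habs : |lam k / M| < 1 := by
            rw [abs_div, abs_of_pos hMpos', div_lt_one hMpos']
            refine lt_of_le_of_ne (hle k hak) (fun h => ?_)
            rcases (abs_eq hMpos'.le).mp h with h | h
            exacts [h1 h, h2 h]
          exact (tendsto_pow_atTop_nhds_zero_of_abs_lt_one habs).comp
            he_mono.tendsto_atTop
    have hOtend : ∀ k, a k ≠ 0 → Tendsto (fun n => (lam k / M) ^ (o n)) atTop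
        (nhds (if lam k = M then 1 else if lam k = -M then -1 else 0)) := by
      intro k hak
      by_cases h1 : lam k = M
      · rw [if_pos h1]
        have : ∀ n, (lam k / M) ^ (o n) = 1 := fun n => by
          rw [h1, div_self hMpos'.ne', one_pow]
        simpa [funext this] using (tendsto_const_nhds :
          Tendsto (fun _ : ℕ => (1:ℝ)) atTop (nhds 1))
      · by_cases h2 : lam k = -M
        · rw [if_neg h1, if_pos h2]
          have : ∀ n, (lam k / M) ^ (o n) = -1 := fun n => by
            rw [h2, neg_div, div_self hMpos'.ne']
            exact (ho_prop n).1.neg_one_pow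
          simpa [funext this] using (tendsto_const_nhds :
            Tendsto (fun _ : ℕ => (-1:ℝ)) atTop (nhds (-1)))
        · rw [if_neg h1, if_neg h2]
          have habs : |lam k / M| < 1 := by
            rw [abs_div, abs_of_pos hMpos', div_lt_one hMpos']
            refine lt_of_le_of_ne (hle k hak) (fun h => ?_)
            rcases (abs_eq hMpos'.le).mp h with h | h
            exacts [h1 h, h2 h]
          exact (tendsto_pow_atTop_nhds_zero_of_abs_lt_one habs).comp
            ho_mono.tendsto_atTop
    have hEsum := key e he_mono (fun n => (he_prop n).2) _ hEtend
    have hOsum := key o ho_mono (fun n => (ho_prop n).2) _ hOtend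
    rcases (abs_eq hMpos'.le).mp hMabs.symm with hpos | hneg
    · -- lam k0 = M
      have hsum2 : ∑ k, (if lam k = M then 2 * a k else 0) = 0 := by
        have heq : ∑ k, (if lam k = M then 2 * a k else 0)
            = (∑ k, a k * (if lam k = M then 1 else if lam k = -M then 1 else 0))
              + ∑ k, a k * (if lam k = M then 1 else if lam k = -M then -1 else 0) := by
          rw [← Finset.sum_add_distrib]
          apply Finset.sum_congr rfl
          intro k _
          split_ifs with h1 h2 <;> ring
        rw [heq, hEsum, hOsum, add_zero]
      have hsingle : ∑ k, (if lam k = M then 2 * a k else 0) = 2 * a k0 := by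
        rw [Finset.sum_eq_single_of_mem k0 (Finset.mem_univ k0)
          (fun k _ hk => if_neg (fun h => hk (hlam (h.trans hpos.symm)))),
          if_pos hpos]
      rw [hsingle] at hsum2
      exact hak0 (by linarith)
    · -- lam k0 = -M
      have hsum2 : ∑ k, (if lam k = -M then 2 * a k else 0) = 0 := by
        have heq : ∑ k, (if lam k = -M then 2 * a k else 0)
            = (∑ k, a k * (if lam k = M then 1 else if lam k = -M then 1 else 0))
              - ∑ k, a k * (if lam k = M then 1 else if lam k = -M then -1 else 0) := by
          rw [← Finset.sum_sub_distrib]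
          apply Finset.sum_congr rfl
          intro k _
          split_ifs with h1 h2 <;> try ring
          · exfalso; rw [h1] at h2; linarith
        rw [heq, hEsum, hOsum, sub_zero]
      have hsingle : ∑ k, (if lam k = -M then 2 * a k else 0) = 2 * a k0 := by
        rw [Finset.sum_eq_single_of_mem k0 (Finset.mem_univ k0)
          (fun k _ hk => if_neg (fun h => hk (hlam (h.trans hneg.symm)))),
          if_pos hneg]
      rw [hsingle] at hsum2
      exact hak0 (by linarith)

theorem stmt3 (σ : ℝ → ℝ) (R : ℝ) (hR : 0 < R) (c : ℕ → ℝ)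
    (hσ : ∀ x ∈ Set.Ioo (-R) R, HasSum (fun j => c j * x ^ j) (σ x))
    (hc0 : c 0 ≠ 0)
    (hodd : ∀ N : ℕ, ∃ j, Odd j ∧ N < j ∧ c j ≠ 0)
    (heven : ∀ N : ℕ, ∃ j, Even j ∧ N < j ∧ c j ≠ 0)
    (d r : ℕ) (w : Fin r → EuclideanSpace ℝ (Fin d)) (hw : Function.Injective w) :
    LinearIndependent ℝ
      (fun k => fun x : EuclideanSpace ℝ (Fin d) => σ (inner ℝ (w k) x : ℝ)) := by
  rw [Fintype.linearIndependent_iff]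
  intro g hg
  obtain ⟨v, hv⟩ := lemA w hw
  set lam : Fin r → ℝ := fun k => (inner ℝ (w k) v : ℝ) with hlamdef
  have hpt : ∀ t : ℝ, ∑ k, g k * σ (t * lam k) = 0 := by
    intro t
    have h1 := congrFun hg (t • v)
    simp only [Finset.sum_apply, Pi.smul_apply, smul_eq_mul, Pi.zero_apply] at h1
    rw [← h1]
    apply Finset.sum_congr rfl
    intro k _
    rw [real_inner_smul_right]
  set L : ℝ := 1 + ∑ k, |lam k| with hLdef
  have hL : 0 < L := by
    have : (0:ℝ) ≤ ∑ k, |lam k| := Finset.sum_nonneg fun k _ => abs_nonneg _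
    rw [hLdef]; linarith
  have hLk : ∀ k, |lam k| ≤ L := by
    intro k
    have h1 : |lam k| ≤ ∑ k, |lam k| :=
      Finset.single_le_sum (fun k _ => abs_nonneg (lam k)) (Finset.mem_univ k)
    rw [hLdef]; linarith
  have hε : (0:ℝ) < R / L := div_pos hR hL
  have hb : ∀ t : ℝ, |t| < R / L →
      HasSum (fun j => (c j * ∑ k, g k * lam k ^ j) * t ^ j) 0 := by
    intro t ht
    have hmem : ∀ k, t * lam k ∈ Set.Ioo (-R) R := by
      intro k
      rw [Set.mem_Ioo, ← abs_lt, abs_mul]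
      calc |t| * |lam k| ≤ |t| * L := by
            exact mul_le_mul_of_nonneg_left (hLk k) (abs_nonneg t)
        _ < (R / L) * L := by
            apply mul_lt_mul_of_pos_right ht hL
        _ = R := div_mul_cancel₀ R hL.ne'
    have hk : ∀ k ∈ Finset.univ, HasSum
        (fun j => g k * (c j * (t * lam k) ^ j)) (g k * σ (t * lam k)) :=
      fun k _ => (hσ (t * lam k) (hmem k)).mul_left (g k)
    have hsum := hasSum_sum hk
    rw [hpt t] at hsum
    convert hsum using 1
    funext j
    rw [Finset.mul_sum, Finset.sum_mul]
    apply Finset.sum_congr rfl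
    intro k _
    rw [mul_pow]
    ring
  have hcoef : ∀ j, c j * ∑ k, g k * lam k ^ j = 0 :=
    lemC _ _ hε hb
  have h0 : ∑ k, g k = 0 := by
    have := hcoef 0
    simp only [pow_zero, mul_one] at this
    exact (mul_eq_zero.mp this).resolve_left hc0
  have hEv : ∀ N : ℕ, ∃ j, Even j ∧ N < j ∧ ∑ k, g k * lam k ^ j = 0 := by
    intro N
    obtain ⟨j, hj1, hj2, hj3⟩ := heven N
    exact ⟨j, hj1, hj2, (mul_eq_zero.mp (hcoef j)).resolve_left hj3⟩
  have hOd : ∀ N : ℕ, ∃ j, Odd j ∧ N < j ∧ ∑ k, g k * lam k ^ j = 0 := by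
    intro N
    obtain ⟨j, hj1, hj2, hj3⟩ := hodd N
    exact ⟨j, hj1, hj2, (mul_eq_zero.mp (hcoef j)).resolve_left hj3⟩
  exact lemD lam g hv h0 hEv hOd
end

section
/- Let σ : ℝ → ℝ be real analytic such that there exists N with c_j = 0 for all odd j > N (i.e., σ is a polynomial plus an even function). Then for r > 2(N+1)^d there exist pairwise distinct w_1, …, w_{2r} ∈ ℝ^d such that σ(w_1·x), …, σ(w_{2r}·x) are linearly dependent. -/
theorem stmt4 (σ : ℝ → ℝ) (hσa : AnalyticOnNhd ℝ σ Set.univ)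
    (R : ℝ) (hR : 0 < R) (c : ℕ → ℝ)
    (hσ : ∀ x ∈ Set.Ioo (-R) R, HasSum (fun j => c j * x ^ j) (σ x))
    (N : ℕ) (hodd : ∀ j, Odd j → N < j → c j = 0)
    (d : ℕ) (hd : 0 < d) (r : ℕ) (hr : 2 * (N + 1) ^ d < r) :
    ∃ w : Fin (2 * r) → EuclideanSpace ℝ (Fin d), Function.Injective w ∧
      ¬ LinearIndependent ℝ
          (fun k => fun x : EuclideanSpace ℝ (Fin d) => σ (inner ℝ (w k) x : ℝ)) := by
  classical
  have i0 : Fin d := ⟨0, hd⟩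
  -- Key identity: the odd part of σ is a polynomial of degree ≤ N, globally.
  have key : ∀ t : ℝ, σ t - σ (-t)
      = ∑ j ∈ Finset.range (N + 1), (c j * t ^ j - c j * (-t) ^ j) := by
    have hFa : AnalyticOnNhd ℝ
        (fun t : ℝ => σ t - σ (-t)
          - ∑ j ∈ Finset.range (N + 1), (c j * t ^ j - c j * (-t) ^ j)) Set.univ := by
      apply AnalyticOnNhd.sub
      · exact hσa.sub (hσa.comp analyticOnNhd_id.neg (Set.mapsTo_univ _ _))
      · have hs := Finset.analyticOnNhd_sum (𝕜 := ℝ) (s := Set.univ) (Finset.range (N + 1))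
          (f := fun j (t : ℝ) => c j * t ^ j - c j * (-t) ^ j) (fun j _ => by
            exact (analyticOnNhd_const.mul (analyticOnNhd_id.pow j)).sub
              (analyticOnNhd_const.mul (analyticOnNhd_id.neg.pow j)))
        convert hs using 1
        funext t
        simp [Finset.sum_apply]
    have hzero : ∀ t ∈ Set.Ioo (-R) R, σ t - σ (-t)
        - ∑ j ∈ Finset.range (N + 1), (c j * t ^ j - c j * (-t) ^ j) = 0 := by
      intro t ht
      have ht' : -t ∈ Set.Ioo (-R) R := by
        constructor
        · linarith [ht.2]
        · linarith [ht.1]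
      have h3 : HasSum (fun j => c j * t ^ j - c j * (-t) ^ j) (σ t - σ (-t)) :=
        (hσ t ht).sub (hσ (-t) ht')
      have h4 : HasSum (fun j => c j * t ^ j - c j * (-t) ^ j)
          (∑ j ∈ Finset.range (N + 1), (c j * t ^ j - c j * (-t) ^ j)) := by
        apply hasSum_sum_of_ne_finset_zero
        intro j hj
        have hj' : N < j := by
          by_contra h
          exact hj (Finset.mem_range.mpr (by omega))
        rcases Nat.even_or_odd j with he | ho
        · rw [he.neg_pow]; ring
        · rw [hodd j ho hj']; ring
      rw [h3.unique h4]
      ring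
    have hEq : Set.EqOn (fun t : ℝ => σ t - σ (-t)
        - ∑ j ∈ Finset.range (N + 1), (c j * t ^ j - c j * (-t) ^ j)) 0 Set.univ := by
      apply hFa.eqOn_zero_of_preconnected_of_eventuallyEq_zero isPreconnected_univ
        (Set.mem_univ (0 : ℝ))
      filter_upwards [Ioo_mem_nhds (show -R < (0:ℝ) by linarith) hR] with t ht
      exact hzero t ht
    intro t
    have := hEq (Set.mem_univ t)
    simp only [Pi.zero_apply] at this
    linarith [this]
  -- The polynomial subspace
  set pm : Fin (N + 1) → (EuclideanSpace ℝ (Fin d) → ℝ) :=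
    fun j => fun x => (x i0) ^ (j : ℕ) with hpm
  set S : Submodule ℝ (EuclideanSpace ℝ (Fin d) → ℝ) :=
    Submodule.span ℝ (Set.range pm) with hS
  haveI : FiniteDimensional ℝ S := FiniteDimensional.span_of_finite ℝ (Set.finite_range pm)
  set Of : Fin r → (EuclideanSpace ℝ (Fin d) → ℝ) :=
    fun k => fun x => σ (((k : ℝ) + 1) * x i0) - σ (-(((k : ℝ) + 1) * x i0)) with hOf
  have hOmem : ∀ k, Of k ∈ S := by
    intro k
    have hrepr : Of k = ∑ j : Fin (N + 1),
        (c j * ((k : ℝ) + 1) ^ (j : ℕ) - c j * (-((k : ℝ) + 1)) ^ (j : ℕ)) • pm j := by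
      funext x
      simp only [hOf, key, Finset.sum_apply, Pi.smul_apply, smul_eq_mul, hpm]
      rw [Fin.sum_univ_eq_sum_range
        (fun j => (c j * ((k : ℝ) + 1) ^ j - c j * (-((k : ℝ) + 1)) ^ j) * (x i0) ^ j)]
      apply Finset.sum_congr rfl
      intro j _
      rw [show -(((k : ℝ) + 1) * x i0) = (-((k : ℝ) + 1)) * x i0 by ring, mul_pow, mul_pow]
      ring
    rw [hrepr]
    exact Submodule.sum_smul_mem S _ (fun j _ => Submodule.subset_span (Set.mem_range_self j))
  -- linear dependence of the odd parts
  have hdep : ¬ LinearIndependent ℝ (fun k : Fin r => (⟨Of k, hOmem k⟩ : S)) := by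
    intro h
    have h1 := h.fintype_card_le_finrank
    have h2 : Module.finrank ℝ S ≤ N + 1 := by
      have := finrank_range_le_card (R := ℝ) pm
      simpa [Set.finrank, Fintype.card_fin] using this
    have h3 : N + 1 ≤ (N + 1) ^ d := Nat.le_self_pow hd.ne' (N + 1)
    simp only [Fintype.card_fin] at h1
    omega
  obtain ⟨a, hsum, k0, hk0⟩ := Fintype.not_linearIndependent_iff.mp hdep
  have hsum' : ∑ k : Fin r, a k • Of k = 0 := by
    have := congrArg Subtype.val hsum
    simpa using this
  -- the vectors
  set sv : Fin (r + r) → ℝ :=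
    Fin.addCases (fun k : Fin r => (k : ℝ) + 1) (fun k : Fin r => -((k : ℝ) + 1)) with hsv
  set g : Fin (r + r) → ℝ := Fin.addCases (fun k => a k) (fun k => -(a k)) with hg
  set e : Fin (2 * r) ≃ Fin (r + r) := finCongr (two_mul r) with he
  refine ⟨(fun p => EuclideanSpace.single i0 (sv p)) ∘ e, ?_, ?_⟩
  · apply Function.Injective.comp ?_ e.injective
    have hsvinj : Function.Injective sv := by
      intro p q h
      induction p using Fin.addCases with
      | left p =>
        induction q using Fin.addCases with
        | left q =>
          simp only [hsv, Fin.addCases_left] at h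
          have : (p : ℕ) = (q : ℕ) := by exact_mod_cast (by linarith : ((p : ℕ) : ℝ) = q)
          exact congrArg _ (Fin.ext this)
        | right q =>
          simp only [hsv, Fin.addCases_left, Fin.addCases_right] at h
          exfalso
          have h1 : (0 : ℝ) ≤ (p : ℕ) := Nat.cast_nonneg _
          have h2 : (0 : ℝ) ≤ (q : ℕ) := Nat.cast_nonneg _
          linarith
      | right p =>
        induction q using Fin.addCases with
        | left q =>
          simp only [hsv, Fin.addCases_left, Fin.addCases_right] at h
          exfalso
          have h1 : (0 : ℝ) ≤ (p : ℕ) := Nat.cast_nonneg _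
          have h2 : (0 : ℝ) ≤ (q : ℕ) := Nat.cast_nonneg _
          linarith
        | right q =>
          simp only [hsv, Fin.addCases_right] at h
          have : (p : ℕ) = (q : ℕ) := by exact_mod_cast (by linarith : ((p : ℕ) : ℝ) = q)
          exact congrArg _ (Fin.ext this)
    intro p q h
    apply hsvinj
    have := congrArg (fun v => v i0) h
    simpa [EuclideanSpace.single_apply] using this
  · rw [Fintype.not_linearIndependent_iff]
    refine ⟨fun k => g (e k), ?_, ⟨e.symm (Fin.castAdd r k0), ?_⟩⟩
    · have hreindex : ∑ k : Fin (2 * r), g (e k) •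
          (fun x : EuclideanSpace ℝ (Fin d) =>
            σ (inner ℝ (EuclideanSpace.single i0 (sv (e k))) x : ℝ))
          = ∑ p : Fin (r + r), g p •
          (fun x : EuclideanSpace ℝ (Fin d) =>
            σ (inner ℝ (EuclideanSpace.single i0 (sv p)) x : ℝ)) :=
        Equiv.sum_comp e (fun p => g p • (fun x : EuclideanSpace ℝ (Fin d) =>
          σ (inner ℝ (EuclideanSpace.single i0 (sv p)) x : ℝ)))
      show (∑ k : Fin (2 * r), g (e k) • fun x : EuclideanSpace ℝ (Fin d) =>
          σ (inner ℝ (EuclideanSpace.single i0 (sv (e k))) x : ℝ)) = 0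
      rw [hreindex, Fin.sum_univ_add]
      have hinner : ∀ (t : ℝ) (x : EuclideanSpace ℝ (Fin d)),
          (inner ℝ (EuclideanSpace.single i0 t) x : ℝ) = t * x i0 := by
        intro t x
        rw [real_inner_comm]
        simp [EuclideanSpace.inner_single_right]
      have hcomb : ∀ k : Fin r,
          g (Fin.castAdd r k) • (fun x : EuclideanSpace ℝ (Fin d) =>
            σ (inner ℝ (EuclideanSpace.single i0 (sv (Fin.castAdd r k))) x : ℝ))
          + g (Fin.natAdd r k) • (fun x : EuclideanSpace ℝ (Fin d) =>
            σ (inner ℝ (EuclideanSpace.single i0 (sv (Fin.natAdd r k))) x : ℝ))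
          = a k • Of k := by
        intro k
        funext x
        simp only [hg, hsv, Fin.addCases_left, Fin.addCases_right, Pi.add_apply,
          Pi.smul_apply, smul_eq_mul, hinner, hOf, neg_mul]
        ring
      rw [← Finset.sum_add_distrib]
      calc ∑ k : Fin r, _ = ∑ k : Fin r, a k • Of k := Finset.sum_congr rfl fun k _ => hcomb k
        _ = 0 := hsum'
    · simp only [he, Equiv.apply_symm_apply, hg, Fin.addCases_left]
      exact hk0
end

section
/- Let σ : ℝ → ℝ be continuous and rapidly decreasing (as above), and let p_1, …, p_r be nonzero reals with |p_1| > |p_k| for all k ≥ 2. If α_1, …, α_r ∈ ℝ satisfy ∑_{k=1}^r α_k σ(p_k ε) = 0 for all ε ∈ ℝ, then α_1 = 0. -/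
open Filter MeasureTheory Complex Set Asymptotics

lemma sigma_decay (f : ℝ → ℝ) (hcont : Continuous f)
    (hrapid : ∀ ε : ℝ, 0 < ε → ∃ M : ℝ, ∀ x y : ℝ,
      M ≤ |x| → M ≤ |y| → M ≤ |y| - |x| → |f y| ≤ ε * |f x|) :
    ∃ a C M₁ : ℝ, 0 < a ∧ 0 < C ∧ 1 ≤ M₁ ∧
      ∀ u : ℝ, M₁ ≤ u → |f u| ≤ C * Real.exp (-a * u) ∧ |f (-u)| ≤ C * Real.exp (-a * u) := by
  obtain ⟨M, hM⟩ := hrapid (1/2) (by norm_num)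
  set M₁ := max M 1 with hM₁def
  have hM₁1 : (1:ℝ) ≤ M₁ := le_max_right _ _
  have hM₁pos : (0:ℝ) < M₁ := lt_of_lt_of_le one_pos hM₁1
  have hMM₁ : M ≤ M₁ := le_max_left _ _
  obtain ⟨B, hB⟩ := (isCompact_Icc (a := -(3*M₁)) (b := 3*M₁)).exists_bound_of_continuousOn
    hcont.continuousOn
  have hB0 : 0 ≤ B := le_trans (norm_nonneg (f 0)) (hB 0 (by constructor <;> nlinarith))
  have hglobal : ∀ u : ℝ, |f u| ≤ B := by
    intro u
    by_cases h3 : |u| ≤ 3*M₁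
    · have := hB u (by
        rw [mem_Icc]
        constructor
        · linarith [neg_abs_le u]
        · linarith [le_abs_self u])
      simpa [Real.norm_eq_abs] using this
    · push_neg at h3
      have h2M : |2*M₁| = 2*M₁ := abs_of_pos (by linarith)
      have hb2 : |f (2*M₁)| ≤ B := by
        have := hB (2*M₁) (by rw [mem_Icc]; constructor <;> nlinarith)
        simpa [Real.norm_eq_abs] using this
      have := hM (2*M₁) u (by rw [h2M]; linarith) (by linarith) (by rw [h2M]; linarith)
      nlinarith [abs_nonneg (f u)]
  have key : ∀ n : ℕ, ∀ u : ℝ, ((n:ℝ)+1)*M₁ ≤ |u| → |f u| ≤ B * (1/2)^n := by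
    intro n
    induction n with
    | zero => intro u _; simpa using hglobal u
    | succ n ih =>
      intro u hu
      have hun : ((n:ℝ)+1+1)*M₁ ≤ |u| := by push_cast at hu ⊢; linarith
      set v := |u| - M₁ with hv
      have hvpos : ((n:ℝ)+1)*M₁ ≤ v := by
        have hn0 : (0:ℝ) ≤ (n:ℝ) := Nat.cast_nonneg n
        nlinarith
      have hv0 : 0 < v := by
        have hn0 : (0:ℝ) ≤ (n:ℝ) := Nat.cast_nonneg n
        nlinarith
      have hvabs : |v| = v := abs_of_pos hv0
      have h1 : |f u| ≤ 1/2 * |f v| :=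
        hM v u (by rw [hvabs]; nlinarith [Nat.cast_nonneg (α := ℝ) n]) (by nlinarith [Nat.cast_nonneg (α := ℝ) n]) (by rw [hvabs]; simp only [hv]; linarith)
      have h2 := ih v (by rw [hvabs]; exact hvpos)
      calc |f u| ≤ 1/2 * |f v| := h1
        _ ≤ 1/2 * (B * (1/2)^n) := by linarith
        _ = B * (1/2)^(n+1) := by ring
  refine ⟨Real.log 2 / M₁, 4*B+1, M₁, div_pos (Real.log_pos one_lt_two) hM₁pos, by linarith, hM₁1, ?_⟩
  intro u hu
  have hu0 : 0 < u := lt_of_lt_of_le hM₁pos hu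
  set m := ⌊u / M₁⌋₊ with hm
  have hm1 : 1 ≤ m := Nat.le_floor (by
    rw [Nat.cast_one, le_div_iff₀ hM₁pos]; linarith)
  have hfloor_le : (m:ℝ) ≤ u / M₁ := Nat.floor_le (by positivity)
  have hlt : u / M₁ < (m:ℝ) + 1 := Nat.lt_floor_add_one _
  set n := m - 1 with hn
  have hcast : ((n:ℝ)+1) = (m:ℝ) := by
    rw [hn]
    push_cast [Nat.cast_sub hm1]
    ring
  have hkey : ∀ w:ℝ, |w| = u → |f w| ≤ B*(1/2)^n := by
    intro w hw
    apply key n w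
    rw [hw, hcast]
    calc (m:ℝ)*M₁ ≤ (u/M₁)*M₁ := by nlinarith
      _ = u := by field_simp
  have hpow : (1/2:ℝ)^n ≤ 4 * Real.exp (-(Real.log 2 / M₁) * u) := by
    have hexp_le : u/M₁ - 2 ≤ (n:ℝ) := by
      have : (n:ℝ) = (m:ℝ) - 1 := by linarith
      linarith
    calc (1/2:ℝ)^n = (1/2:ℝ)^((n:ℝ)) := (Real.rpow_natCast _ n).symm
      _ ≤ (1/2:ℝ)^(u/M₁-2) :=
        Real.rpow_le_rpow_of_exponent_ge (by norm_num) (by norm_num) hexp_le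
      _ = Real.exp (Real.log (1/2) * (u/M₁-2)) := by
        rw [Real.rpow_def_of_pos (by norm_num)]
      _ = Real.exp (2*Real.log 2) * Real.exp (-(Real.log 2/M₁)*u) := by
        rw [← Real.exp_add, one_div, Real.log_inv]
        congr 1
        field_simp
        ring
      _ = 4 * Real.exp (-(Real.log 2/M₁)*u) := by
        rw [two_mul, Real.exp_add, Real.exp_log two_pos]; norm_num
  have hexp0 : 0 < Real.exp (-(Real.log 2 / M₁) * u) := Real.exp_pos _
  constructor
  · calc |f u| ≤ B*(1/2)^n := hkey u (abs_of_pos hu0)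
      _ ≤ B*(4 * Real.exp (-(Real.log 2 / M₁) * u)) := by nlinarith
      _ ≤ (4*B+1) * Real.exp (-(Real.log 2 / M₁) * u) := by nlinarith
  · calc |f (-u)| ≤ B*(1/2)^n := hkey (-u) (by rw [abs_neg]; exact abs_of_pos hu0)
      _ ≤ B*(4 * Real.exp (-(Real.log 2 / M₁) * u)) := by nlinarith
      _ ≤ (4*B+1) * Real.exp (-(Real.log 2 / M₁) * u) := by nlinarith

lemma mellin_csmul (f : ℝ → ℂ) (c : ℂ) (s : ℂ) :
    mellin (fun t => c • f t) s = c • mellin f s := by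
  simp only [mellin]
  rw [← integral_smul]
  congr 1
  funext t
  rw [smul_comm]

theorem stmt6 (σ : ℝ → ℝ) (hcont : Continuous σ)
    (hnz : ∃ M₀ : ℝ, ∀ x : ℝ, M₀ ≤ |x| → σ x ≠ 0)
    (hrapid : ∀ ε : ℝ, 0 < ε → ∃ M : ℝ, ∀ x y : ℝ,
      M ≤ |x| → M ≤ |y| → M ≤ |y| - |x| → |σ y| ≤ ε * |σ x|)
    (r : ℕ) (hr : 0 < r) (p : Fin r → ℝ) (hp0 : ∀ k, p k ≠ 0)
    (hdom : ∀ k, k ≠ ⟨0, hr⟩ → |p k| < |p ⟨0, hr⟩|)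
    (α : Fin r → ℝ) (h : ∀ ε : ℝ, ∑ k, α k * σ (p k * ε) = 0) :
    α ⟨0, hr⟩ = 0 := by
  by_contra hα
  obtain ⟨M₀, hM₀⟩ := hnz
  set i0 : Fin r := ⟨0, hr⟩ with hi0
  set fp : ℝ → ℂ := fun t => (σ t : ℂ) with hfp
  set fm : ℝ → ℂ := fun t => (σ (-t) : ℂ) with hfm
  obtain ⟨a, C, M₁, ha, hC, hM₁, hdecay⟩ := sigma_decay σ hcont hrapid
  have hfpcont : Continuous fp := Complex.continuous_ofReal.comp hcont
  have hfmcont : Continuous fm := Complex.continuous_ofReal.comp (hcont.comp continuous_neg)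
  have hOp : fp =O[atTop] (fun t => Real.exp (-a * t)) := by
    rw [Asymptotics.isBigO_iff]
    refine ⟨C, ?_⟩
    filter_upwards [eventually_ge_atTop M₁] with u hu
    have := (hdecay u hu).1
    simpa [hfp, Complex.norm_real, Real.norm_eq_abs, abs_of_pos (Real.exp_pos (-a*u))] using this
  have hOm : fm =O[atTop] (fun t => Real.exp (-a * t)) := by
    rw [Asymptotics.isBigO_iff]
    refine ⟨C, ?_⟩
    filter_upwards [eventually_ge_atTop M₁] with u hu
    have := (hdecay u hu).2
    simpa [hfm, Complex.norm_real, Real.norm_eq_abs, abs_of_pos (Real.exp_pos (-a*u))] using this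
  have hrpow0 : (fun t:ℝ => t ^ (-(0:ℝ))) = fun _:ℝ => (1:ℝ) := by
    funext t; rw [neg_zero, Real.rpow_zero]
  have hbotp : fp =O[nhdsWithin (0:ℝ) (Ioi 0)] (fun t => t ^ (-(0:ℝ))) := by
    rw [hrpow0]
    exact (hfpcont.continuousAt.tendsto.mono_left nhdsWithin_le_nhds).isBigO_one ℝ
  have hbotm : fm =O[nhdsWithin (0:ℝ) (Ioi 0)] (fun t => t ^ (-(0:ℝ))) := by
    rw [hrpow0]
    exact (hfmcont.continuousAt.tendsto.mono_left nhdsWithin_le_nhds).isBigO_one ℝ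
  have hlocp : LocallyIntegrableOn fp (Ioi 0) := hfpcont.locallyIntegrable.locallyIntegrableOn _
  have hlocm : LocallyIntegrableOn fm (Ioi 0) := hfmcont.locallyIntegrable.locallyIntegrableOn _
  have hConvP : ∀ {s:ℂ}, 0 < s.re → MellinConvergent fp s := fun hs =>
    mellinConvergent_of_isBigO_rpow_exp ha hlocp hOp hbotp hs
  have hConvM : ∀ {s:ℂ}, 0 < s.re → MellinConvergent fm s := fun hs =>
    mellinConvergent_of_isBigO_rpow_exp ha hlocm hOm hbotm hs
  have hDiffP : ∀ {s:ℂ}, 0 < s.re → DifferentiableAt ℂ (mellin fp) s := fun hs =>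
    mellin_differentiableAt_of_isBigO_rpow_exp ha hlocp hOp hbotp hs
  set b : Fin r → ℝ := fun k => |p k| with hbdef
  have hb : ∀ k, 0 < b k := fun k => abs_pos.mpr (hp0 k)
  set pos : Finset (Fin r) := Finset.univ.filter (fun k => 0 < p k) with hposdef
  set neg : Finset (Fin r) := Finset.univ.filter (fun k => ¬ 0 < p k) with hnegdef
  set Dp : ℂ → ℂ := fun s => ∑ k ∈ pos, (α k : ℂ) * (b k:ℂ)^(-s) with hDp
  set Dm : ℂ → ℂ := fun s => ∑ k ∈ neg, (α k : ℂ) * (b k:ℂ)^(-s) with hDm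
  -- pointwise identification of the summand functions
  have hgp : ∀ k, 0 < p k →
      (fun t:ℝ => ((α k * σ (p k * t) : ℝ) : ℂ)) = fun t => (α k : ℂ) • fp (b k * t) := by
    intro k hk; funext t
    have hb' : b k * t = p k * t := by simp only [hbdef, abs_of_pos hk]
    rw [hb']
    simp [hfp, Complex.ofReal_mul, smul_eq_mul]
  have hgm : ∀ k, ¬ 0 < p k →
      (fun t:ℝ => ((α k * σ (p k * t) : ℝ) : ℂ)) = fun t => (α k : ℂ) • fm (b k * t) := by
    intro k hk; funext t
    have hkneg : p k < 0 := lt_of_le_of_ne (not_lt.mp hk) (hp0 k)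
    have hb' : -(b k * t) = p k * t := by simp only [hbdef, abs_of_neg hkneg]; ring
    simp only [hfm, hb']
    simp [Complex.ofReal_mul, smul_eq_mul]
  have hg2p : ∀ k, 0 < p k →
      (fun t:ℝ => ((α k * σ (-(p k * t)) : ℝ) : ℂ)) = fun t => (α k : ℂ) • fm (b k * t) := by
    intro k hk; funext t
    have hb' : -(b k * t) = -(p k * t) := by simp only [hbdef, abs_of_pos hk]
    simp only [hfm, hb']
    simp [Complex.ofReal_mul, smul_eq_mul]
  have hg2m : ∀ k, ¬ 0 < p k →
      (fun t:ℝ => ((α k * σ (-(p k * t)) : ℝ) : ℂ)) = fun t => (α k : ℂ) • fp (b k * t) := by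
    intro k hk; funext t
    have hkneg : p k < 0 := lt_of_le_of_ne (not_lt.mp hk) (hp0 k)
    have hb' : b k * t = -(p k * t) := by simp only [hbdef, abs_of_neg hkneg]; ring
    rw [hb']
    simp [hfp, Complex.ofReal_mul, smul_eq_mul]
  -- the two Mellin identities
  have eq1 : ∀ s : ℂ, 0 < s.re → Dp s * mellin fp s + Dm s * mellin fm s = 0 := by
    intro s hs
    have hconvP : MellinConvergent fp s := hConvP hs
    have hconvM : MellinConvergent fm s := hConvM hs
    have hconv : ∀ k : Fin r, MellinConvergent (fun t:ℝ => ((α k * σ (p k * t) : ℝ) : ℂ)) s := by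
      intro k
      by_cases hk : 0 < p k
      · rw [hgp k hk]
        exact ((MellinConvergent.comp_mul_left (hb k)).mpr hconvP).const_smul _
      · rw [hgm k hk]
        exact ((MellinConvergent.comp_mul_left (hb k)).mpr hconvM).const_smul _
    have hzero : ∑ k : Fin r, mellin (fun t:ℝ => ((α k * σ (p k * t):ℝ):ℂ)) s = 0 := by
      have step1 : ∑ k : Fin r, mellin (fun t:ℝ => ((α k * σ (p k * t):ℝ):ℂ)) s
          = ∫ t in Ioi (0:ℝ), ∑ k : Fin r, (t:ℂ)^(s-1) • ((α k * σ (p k * t):ℝ):ℂ) := by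
        rw [MeasureTheory.integral_finset_sum _ (fun k _ => hconv k)]
        rfl
      rw [step1]
      have step2 : ∀ t ∈ Ioi (0:ℝ),
          ∑ k : Fin r, (t:ℂ)^(s-1) • ((α k * σ (p k * t):ℝ):ℂ) = 0 := by
        intro t _
        rw [← Finset.smul_sum]
        have h0 : ∑ k : Fin r, ((α k * σ (p k * t) : ℝ) : ℂ) = 0 := by
          norm_cast
          simpa using h t
        rw [h0, smul_zero]
      rw [setIntegral_congr_fun measurableSet_Ioi step2]
      simp
    have hsplit : ∑ k : Fin r, mellin (fun t:ℝ => ((α k * σ (p k * t):ℝ):ℂ)) s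
        = Dp s * mellin fp s + Dm s * mellin fm s := by
      rw [← Finset.sum_filter_add_sum_filter_not Finset.univ (fun k => 0 < p k)
        (fun k => mellin (fun t:ℝ => ((α k * σ (p k * t):ℝ):ℂ)) s)]
      congr 1
      · rw [hDp, Finset.sum_mul]
        refine Finset.sum_congr rfl (fun k hk => ?_)
        have hk' : 0 < p k := (Finset.mem_filter.mp hk).2
        rw [hgp k hk', mellin_csmul, mellin_comp_mul_left fp s (hb k)]
        simp only [smul_eq_mul]
        ring
      · rw [hDm, Finset.sum_mul]
        refine Finset.sum_congr rfl (fun k hk => ?_)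
        have hk' : ¬ 0 < p k := (Finset.mem_filter.mp hk).2
        rw [hgm k hk', mellin_csmul, mellin_comp_mul_left fm s (hb k)]
        simp only [smul_eq_mul]
        ring
    rw [← hsplit, hzero]
  have eq2 : ∀ s : ℂ, 0 < s.re → Dp s * mellin fm s + Dm s * mellin fp s = 0 := by
    intro s hs
    have hconvP : MellinConvergent fp s := hConvP hs
    have hconvM : MellinConvergent fm s := hConvM hs
    have hconv : ∀ k : Fin r, MellinConvergent (fun t:ℝ => ((α k * σ (-(p k * t)) : ℝ) : ℂ)) s := by
      intro k
      by_cases hk : 0 < p k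
      · rw [hg2p k hk]
        exact ((MellinConvergent.comp_mul_left (hb k)).mpr hconvM).const_smul _
      · rw [hg2m k hk]
        exact ((MellinConvergent.comp_mul_left (hb k)).mpr hconvP).const_smul _
    have hzero : ∑ k : Fin r, mellin (fun t:ℝ => ((α k * σ (-(p k * t)):ℝ):ℂ)) s = 0 := by
      have step1 : ∑ k : Fin r, mellin (fun t:ℝ => ((α k * σ (-(p k * t)):ℝ):ℂ)) s
          = ∫ t in Ioi (0:ℝ), ∑ k : Fin r, (t:ℂ)^(s-1) • ((α k * σ (-(p k * t)):ℝ):ℂ) := by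
        rw [MeasureTheory.integral_finset_sum _ (fun k _ => hconv k)]
        rfl
      rw [step1]
      have step2 : ∀ t ∈ Ioi (0:ℝ),
          ∑ k : Fin r, (t:ℂ)^(s-1) • ((α k * σ (-(p k * t)):ℝ):ℂ) = 0 := by
        intro t _
        rw [← Finset.smul_sum]
        have hrel : ∑ k : Fin r, α k * σ (-(p k * t)) = 0 := by
          have := h (-t)
          simpa [mul_neg] using this
        have h0 : ∑ k : Fin r, ((α k * σ (-(p k * t)) : ℝ) : ℂ) = 0 := by
          norm_cast
        rw [h0, smul_zero]
      rw [setIntegral_congr_fun measurableSet_Ioi step2]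
      simp
    have hsplit : ∑ k : Fin r, mellin (fun t:ℝ => ((α k * σ (-(p k * t)):ℝ):ℂ)) s
        = Dp s * mellin fm s + Dm s * mellin fp s := by
      rw [← Finset.sum_filter_add_sum_filter_not Finset.univ (fun k => 0 < p k)
        (fun k => mellin (fun t:ℝ => ((α k * σ (-(p k * t)):ℝ):ℂ)) s)]
      congr 1
      · rw [hDp, Finset.sum_mul]
        refine Finset.sum_congr rfl (fun k hk => ?_)
        have hk' : 0 < p k := (Finset.mem_filter.mp hk).2
        rw [hg2p k hk', mellin_csmul, mellin_comp_mul_left fm s (hb k)]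
        simp only [smul_eq_mul]
        ring
      · rw [hDm, Finset.sum_mul]
        refine Finset.sum_congr rfl (fun k hk => ?_)
        have hk' : ¬ 0 < p k := (Finset.mem_filter.mp hk).2
        rw [hg2m k hk', mellin_csmul, mellin_comp_mul_left fp s (hb k)]
        simp only [smul_eq_mul]
        ring
    rw [← hsplit, hzero]
  have key : ∀ s : ℂ, 0 < s.re → (Dp s^2 - Dm s^2) * mellin fp s = 0 := by
    intro s hs
    have e1 := eq1 s hs
    have e2 := eq2 s hs
    linear_combination Dp s * e1 - Dm s * e2
  -- a point where Dp^2 - Dm^2 is nonzero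
  have hclaim : ∀ e : Fin r → ℝ, (∀ k, e k = 1 ∨ e k = -1) →
      ∀ᶠ n : ℕ in atTop, (∑ k, e k * α k * b k ^ n) ≠ 0 := by
    intro e he
    obtain ⟨Q, hQ0, hQP, hQb⟩ : ∃ Q:ℝ, 0 ≤ Q ∧ Q < b i0 ∧
        ∀ k ∈ Finset.univ.erase i0, b k ≤ Q := by
      rcases Finset.eq_empty_or_nonempty (Finset.univ.erase i0) with hE | hne
      · exact ⟨b i0 / 2, by positivity, half_lt_self (hb i0), by rw [hE]; intro k hk; simp at hk⟩
      · refine ⟨(Finset.univ.erase i0).sup' hne b, ?_, ?_, fun k hk => Finset.le_sup' b hk⟩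
        · obtain ⟨k, hk⟩ := hne
          exact le_trans (hb k).le (Finset.le_sup' b hk)
        · rw [Finset.sup'_lt_iff]
          intro k hk
          exact hdom k (Finset.mem_erase.mp hk).1
    set S : ℝ := ∑ k ∈ Finset.univ.erase i0, |α k| with hS
    have htend : Tendsto (fun n:ℕ => S * (Q / b i0)^n) atTop (nhds 0) := by
      have h1 : |Q / b i0| < 1 := by
        rw [_root_.abs_of_nonneg (div_nonneg hQ0 (hb i0).le), div_lt_one (hb i0)]
        exact hQP
      simpa using (tendsto_pow_atTop_nhds_zero_of_abs_lt_one h1).const_mul S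
    have hev : ∀ᶠ n:ℕ in atTop, S * (Q/b i0)^n < |α i0| := htend.eventually_lt_const (abs_pos.mpr hα)
    filter_upwards [hev] with n hn h0
    have hexpand : e i0 * α i0 * b i0 ^ n + ∑ k ∈ Finset.univ.erase i0, e k * α k * b k ^ n
        = ∑ k, e k * α k * b k ^ n :=
      Finset.add_sum_erase Finset.univ (fun k => e k * α k * b k ^ n) (Finset.mem_univ i0)
    have habs1 : |e i0 * α i0 * b i0 ^ n| = |α i0| * b i0 ^ n := by
      rcases he i0 with h1 | h1 <;>
        simp [h1, abs_mul, _root_.abs_of_nonneg (pow_nonneg (hb i0).le n)]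
    have habs2 : |∑ k ∈ Finset.univ.erase i0, e k * α k * b k ^ n| ≤ S * Q^n := by
      calc |∑ k ∈ Finset.univ.erase i0, e k * α k * b k ^ n|
          ≤ ∑ k ∈ Finset.univ.erase i0, |e k * α k * b k ^ n| :=
            Finset.abs_sum_le_sum_abs _ _
        _ ≤ ∑ k ∈ Finset.univ.erase i0, |α k| * Q^n := by
            refine Finset.sum_le_sum (fun k hk => ?_)
            rcases he k with h1 | h1 <;>
            · rw [h1, abs_mul, abs_mul]
              simp only [abs_one, abs_neg, one_mul]
              have hbk : |b k ^ n| = b k ^ n := abs_of_nonneg (pow_nonneg (hb k).le n)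
              rw [hbk]
              exact mul_le_mul_of_nonneg_left
                (pow_le_pow_left₀ (hb k).le (hQb k hk) n) (abs_nonneg _)
        _ = S * Q^n := by rw [hS, Finset.sum_mul]
    have hlt : S * Q^n < |α i0| * b i0 ^ n := by
      have hb0n : (0:ℝ) < b i0 ^ n := pow_pos (hb i0) n
      have : S * (Q/b i0)^n * b i0 ^ n < |α i0| * b i0 ^ n :=
        (mul_lt_mul_of_pos_right hn hb0n)
      calc S * Q^n = S * (Q/b i0)^n * b i0 ^ n := by
            rw [div_pow]
            field_simp
        _ < |α i0| * b i0 ^ n := this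
    have : e i0 * α i0 * b i0 ^ n = - ∑ k ∈ Finset.univ.erase i0, e k * α k * b k ^ n := by
      rw [eq_neg_iff_add_eq_zero]
      rw [hexpand]
      exact h0
    rw [← habs1] at hlt
    rw [this, abs_neg] at hlt
    exact absurd habs2 (not_le.mpr hlt)
  obtain ⟨n, hu, hv⟩ : ∃ n:ℕ, (∑ k, (1:ℝ) * α k * b k^n) ≠ 0 ∧
      (∑ k, (if 0 < p k then (1:ℝ) else -1) * α k * b k^n) ≠ 0 := by
    have h1 := hclaim (fun _ => 1) (fun _ => Or.inl rfl)
    have h2 := hclaim (fun k => if 0 < p k then (1:ℝ) else -1) (fun k => by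
      by_cases hk : 0 < p k
      · exact Or.inl (if_pos hk)
      · exact Or.inr (if_neg hk))
    exact (h1.and h2).exists
  have hDpn : Dp (-(n:ℂ)) = ((∑ k ∈ pos, α k * b k ^ n : ℝ) : ℂ) := by
    rw [hDp]
    simp only [neg_neg]
    rw [Complex.ofReal_sum]
    refine Finset.sum_congr rfl (fun k hk => ?_)
    rw [Complex.cpow_natCast]
    norm_cast
  have hDmn : Dm (-(n:ℂ)) = ((∑ k ∈ neg, α k * b k ^ n : ℝ) : ℂ) := by
    rw [hDm]
    simp only [neg_neg]
    rw [Complex.ofReal_sum]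
    refine Finset.sum_congr rfl (fun k hk => ?_)
    rw [Complex.cpow_natCast]
    norm_cast
  have hEn : Dp (-(n:ℂ))^2 - Dm (-(n:ℂ))^2 ≠ 0 := by
    have hsum1 : (∑ k ∈ pos, α k * b k ^ n) + (∑ k ∈ neg, α k * b k ^ n)
        = ∑ k, (1:ℝ) * α k * b k^n := by
      rw [hposdef, hnegdef]
      rw [Finset.sum_filter_add_sum_filter_not Finset.univ (fun k => 0 < p k)
        (fun k => α k * b k ^ n)]
      simp
    have hsum2 : (∑ k ∈ pos, α k * b k ^ n) - (∑ k ∈ neg, α k * b k ^ n)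
        = ∑ k, (if 0 < p k then (1:ℝ) else -1) * α k * b k^n := by
      have hA : ∑ k ∈ pos, (if 0 < p k then (1:ℝ) else -1) * α k * b k^n
          = ∑ k ∈ pos, α k * b k ^ n := by
        refine Finset.sum_congr rfl (fun k hk => ?_)
        rw [hposdef] at hk
        rw [if_pos ((Finset.mem_filter.mp hk).2), one_mul]
      have hB : ∑ k ∈ neg, (if 0 < p k then (1:ℝ) else -1) * α k * b k^n
          = - ∑ k ∈ neg, α k * b k ^ n := by
        rw [← Finset.sum_neg_distrib]
        refine Finset.sum_congr rfl (fun k hk => ?_)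
        rw [hnegdef] at hk
        rw [if_neg ((Finset.mem_filter.mp hk).2)]
        ring
      rw [← Finset.sum_filter_add_sum_filter_not Finset.univ (fun k => 0 < p k)
        (fun k => (if 0 < p k then (1:ℝ) else -1) * α k * b k^n), ← hposdef, ← hnegdef, hA, hB]
      ring
    have hfact : Dp (-(n:ℂ))^2 - Dm (-(n:ℂ))^2
        = ((((∑ k, (1:ℝ) * α k * b k^n)) : ℝ) : ℂ)
          * ((((∑ k, (if 0 < p k then (1:ℝ) else -1) * α k * b k^n)) : ℝ) : ℂ) := by
      rw [← hsum1, ← hsum2, hDpn, hDmn]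
      push_cast
      ring
    rw [hfact]
    exact mul_ne_zero (Complex.ofReal_ne_zero.mpr hu) (Complex.ofReal_ne_zero.mpr hv)
  -- E is entire
  have hEdiff : Differentiable ℂ (fun s => Dp s^2 - Dm s^2) := by
    have hD : ∀ (t : Finset (Fin r)), Differentiable ℂ (fun s : ℂ => ∑ k ∈ t, (α k:ℂ)*(b k:ℂ)^(-s)) := by
      intro t
      refine Differentiable.fun_sum (fun k _ => ?_)
      refine (differentiable_const _).mul ?_
      refine Differentiable.const_cpow differentiable_id.neg ?_
      exact Or.inl (Complex.ofReal_ne_zero.mpr (hb k).ne')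
    have h1 : Differentiable ℂ Dp := by rw [hDp]; exact hD pos
    have h2 : Differentiable ℂ Dm := by rw [hDm]; exact hD neg
    exact ((h1.pow 2).sub (h2.pow 2))
  -- mellin fp vanishes on the right half plane
  have hMp0 : ∀ s:ℂ, 0 < s.re → mellin fp s = 0 := by
    intro s hs
    by_contra hne
    have hcontM : ContinuousAt (mellin fp) s := (hDiffP hs).continuousAt
    have h1 : ∀ᶠ z in nhds s, mellin fp z ≠ 0 := hcontM.eventually_ne hne
    have h2 : ∀ᶠ z in nhds s, 0 < z.re :=
      (isOpen_lt continuous_const Complex.continuous_re).eventually_mem hs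
    have hEzero : (fun z => Dp z^2 - Dm z^2) =ᶠ[nhds s] 0 := by
      filter_upwards [h1, h2] with z hz1 hz2
      have hkey := key z hz2
      rcases mul_eq_zero.mp hkey with hE | hMz
      · exact hE
      · exact absurd hMz hz1
    have hall : EqOn (fun z => Dp z^2 - Dm z^2) 0 univ :=
      (hEdiff.differentiableOn.analyticOnNhd isOpen_univ).eqOn_zero_of_preconnected_of_eventuallyEq_zero
        isPreconnected_univ (mem_univ s) hEzero
    exact hEn (hall (mem_univ (-(n:ℂ))))
  -- Mellin inversion at the line re = 1 forces σ to vanish on (0, ∞)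
  set x0 : ℝ := max M₀ 0 + 1 with hx0def
  have hx0 : 0 < x0 := by
    have := le_max_right M₀ 0
    rw [hx0def]; linarith
  have hre1 : ∀ y : ℝ, (0:ℝ) < ((((1:ℝ)):ℂ) + y * Complex.I).re := by
    intro y
    simp [Complex.add_re, Complex.mul_re]
  have hconv1 : MellinConvergent fp ((1:ℝ):ℂ) := hConvP (by simp)
  have hvert : Complex.VerticalIntegrable (mellin fp) 1 := by
    have hzero : (fun y:ℝ => mellin fp (((1:ℝ):ℂ) + y * Complex.I)) = fun _ => 0 := by
      funext y
      exact hMp0 _ (hre1 y)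
    show Integrable (fun y:ℝ => mellin fp (((1:ℝ):ℂ) + y * Complex.I)) _
    rw [hzero]
    exact integrable_zero _ _ _
  have hinvr := mellinInv_mellin_eq 1 fp hx0 hconv1 hvert hfpcont.continuousAt
  have hinv0 : mellinInv 1 (mellin fp) x0 = 0 := by
    rw [mellinInv]
    have hzero : (fun y:ℝ => (x0:ℂ) ^ (-(((1:ℝ):ℂ) + y * Complex.I)) •
        mellin fp (((1:ℝ):ℂ) + y * Complex.I)) = fun _ => 0 := by
      funext y
      rw [hMp0 _ (hre1 y), smul_zero]
    rw [hzero]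
    simp
  have hfx0 : fp x0 = 0 := by rw [← hinvr]; exact hinv0
  have hσx0 : σ x0 = 0 := by
    have h' : ((σ x0 : ℝ) : ℂ) = 0 := hfx0
    exact_mod_cast h'
  refine hM₀ x0 ?_ hσx0
  rw [abs_of_pos hx0, hx0def]
  linarith [le_max_left M₀ 0]
end

section
/- Let σ : ℝ → ℝ be s-times continuously differentiable such that σ^{(s)} is rapidly decreasing and satisfies non-asymptotic symmetry: there is c > 1 with liminf_{x→+∞} |σ^{(s)}(x)|/|σ^{(s)}(−x)| ≥ c or liminf_{x→−∞} |σ^{(s)}(x)|/|σ^{(s)}(−x)| ≥ c. Then for any pairwise distinct nonzero w_1, …, w_r ∈ ℝ^d, the functions σ(w_1·x), …, σ(w_r·x) are linearly independent. -/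
open Filter Finset

lemma exists_inner_ne_zero {E : Type*} [NormedAddCommGroup E] [InnerProductSpace ℝ E]
    {ι : Type*} [DecidableEq ι] (s : Finset ι) (u : ι → E) :
    ∃ v : E, ∀ i ∈ s, u i ≠ 0 → (inner ℝ (u i) v : ℝ) ≠ 0 := by
  classical
  induction s using Finset.induction_on with
  | empty => exact ⟨0, by simp⟩
  | @insert a s ha ih =>
    obtain ⟨v, hv⟩ := ih
    by_cases hua : u a = 0
    · refine ⟨v, ?_⟩
      intro i hi hi0
      rcases Finset.mem_insert.mp hi with h | hi'
      · exact absurd (h ▸ hua) hi0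
      · exact hv i hi' hi0
    · obtain ⟨t, ht⟩ := Infinite.exists_notMem_finset
        ((insert a s).image (fun i => -(inner ℝ (u i) v : ℝ) / (inner ℝ (u i) (u a) : ℝ)))
      refine ⟨v + t • u a, ?_⟩
      intro i hi hi0
      have hkey : (inner ℝ (u i) (v + t • u a) : ℝ) =
          inner ℝ (u i) v + t * inner ℝ (u i) (u a) := by
        rw [inner_add_right, real_inner_smul_right]
      rw [hkey]
      by_cases hiu : (inner ℝ (u i) (u a) : ℝ) = 0
      · rw [hiu, mul_zero, add_zero]
        rcases Finset.mem_insert.mp hi with h | hi'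
        · subst h; exact absurd hiu (inner_self_ne_zero.mpr hi0)
        · exact hv i hi' hi0
      · intro hzero
        apply ht
        refine Finset.mem_image.mpr ⟨i, hi, ?_⟩
        field_simp
        linarith [hzero]

lemma eventually_ge_of_le_liminf' {α : Type*} {u : α → ℝ} {l : Filter α} {c c' : ℝ}
    (h : c ≤ Filter.liminf u l) (hc : c' < c) (hc0 : 0 < c') : ∀ᶠ x in l, c' ≤ u x := by
  rw [Filter.liminf_eq] at h
  have hmem : ∃ a ∈ {a : ℝ | ∀ᶠ x in l, a ≤ u x}, c' ≤ a := by
    by_contra hno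
    push_neg at hno
    have hub : ∀ a ∈ {a : ℝ | ∀ᶠ x in l, a ≤ u x}, a ≤ c' := fun a ha => (hno a ha).le
    have := Real.sSup_le hub hc0.le
    linarith
  obtain ⟨a, ha, hca⟩ := hmem
  exact ha.mono fun x hx => le_trans hca hx

lemma core_lemma (f : ℝ → ℝ) (M₀ : ℝ) (hnz : ∀ x : ℝ, M₀ ≤ |x| → f x ≠ 0)
    (hrapid : ∀ ε : ℝ, 0 < ε → ∃ M : ℝ, ∀ x y : ℝ, M ≤ |x| → M ≤ |y| → M ≤ |y| - |x| →
      |f y| ≤ ε * |f x|)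
    (c' : ℝ) (hc' : 1 < c') (M₁ : ℝ) (hsym : ∀ x : ℝ, M₁ ≤ x → c' * |f (-x)| ≤ |f x|)
    {r : ℕ} (b : Fin r → ℝ) (hbinj : Function.Injective b) (hb0 : ∀ k, b k ≠ 0)
    (cc : Fin r → ℝ) (hsum : ∀ t : ℝ, ∑ k, cc k * f (b k * t) = 0) :
    ∀ k, cc k = 0 := by
  classical
  by_contra hcon
  push_neg at hcon
  obtain ⟨k₀, hk₀⟩ := hcon
  set S : Finset (Fin r) := Finset.univ.filter (fun k => cc k ≠ 0) with hS
  have hSne : S.Nonempty := ⟨k₀, by simp [hS, hk₀]⟩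
  obtain ⟨p, hpS, hpmin⟩ := S.exists_min_image (fun k => |b k|) hSne
  set m : ℝ := |b p| with hm
  have hm0 : 0 < m := abs_pos.mpr (hb0 p)
  set T : Finset (Fin r) := Finset.univ.filter (fun l => m < |b l|) with hT
  set P : Finset (Fin r) := Finset.univ.filter (fun l => b l = m) with hP
  set Q : Finset (Fin r) := Finset.univ.filter (fun l => b l = -m) with hQ
  set α : ℝ := ∑ l ∈ P, cc l with hα
  set β : ℝ := ∑ l ∈ Q, cc l with hβ
  set C : ℝ := ∑ l : Fin r, |cc l| with hC
  have hC0 : 0 ≤ C := Finset.sum_nonneg fun _ _ => abs_nonneg _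
  have hsmall : ∀ l, |b l| < m → cc l = 0 := by
    intro l hl
    by_contra hcl
    exact absurd (hpmin l (by simp [hS, hcl])) (not_le.mpr hl)
  have hPQ : Disjoint P Q := by
    rw [Finset.disjoint_left]
    intro l hlP hlQ
    simp only [hP, hQ, Finset.mem_filter] at hlP hlQ
    have := hlP.2.symm.trans hlQ.2
    linarith
  have hPQT : Disjoint (P ∪ Q) T := by
    rw [Finset.disjoint_left]
    intro l hlPQ hlT
    simp only [hP, hQ, hT, Finset.mem_filter, Finset.mem_union] at hlPQ hlT
    have h2 := hlT.2
    rcases hlPQ with ⟨_, h⟩ | ⟨_, h⟩ <;> rw [h] at h2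
    · rw [abs_of_pos hm0] at h2; linarith
    · rw [abs_neg, abs_of_pos hm0] at h2; linarith
  have eqA : ∀ t : ℝ, α * f (m * t) + β * f (-m * t) = -∑ l ∈ T, cc l * f (b l * t) := by
    intro t
    have h1 : ∑ l ∈ (P ∪ Q) ∪ T, cc l * f (b l * t) = ∑ l : Fin r, cc l * f (b l * t) := by
      apply Finset.sum_subset (Finset.subset_univ _)
      intro l _ hl
      simp only [Finset.mem_union, hP, hQ, hT, Finset.mem_filter, Finset.mem_univ,
        true_and, not_or, not_lt] at hl
      obtain ⟨⟨h1', h2'⟩, h3'⟩ := hl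
      have hlt : |b l| < m := by
        rcases lt_or_eq_of_le h3' with h | h
        · exact h
        · rcases (abs_eq hm0.le).mp h with h' | h'
          · exact absurd h' h1'
          · exact absurd h' h2'
      rw [hsmall l hlt, zero_mul]
    have h2 : ∑ l ∈ P, cc l * f (b l * t) = α * f (m * t) := by
      rw [hα, Finset.sum_mul]
      apply Finset.sum_congr rfl
      intro l hl
      simp only [hP, Finset.mem_filter] at hl
      rw [hl.2]
    have h3 : ∑ l ∈ Q, cc l * f (b l * t) = β * f (-m * t) := by
      rw [hβ, Finset.sum_mul]
      apply Finset.sum_congr rfl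
      intro l hl
      simp only [hQ, Finset.mem_filter] at hl
      rw [hl.2]
    have h4 := hsum t
    rw [← h1, Finset.sum_union hPQT, Finset.sum_union hPQ, h2, h3] at h4
    linarith
  obtain ⟨δ, hδ0, hδle⟩ : ∃ δ : ℝ, 0 < δ ∧ ∀ l ∈ T, δ ≤ |b l| - m := by
    by_cases hT' : T.Nonempty
    · refine ⟨T.inf' hT' (fun l => |b l| - m), ?_, fun l hl => Finset.inf'_le _ hl⟩
      obtain ⟨l, hlT, hle⟩ := T.exists_mem_eq_inf' hT' (fun l => |b l| - m)
      simp only [hT, Finset.mem_filter] at hlT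
      rw [hle]
      linarith [hlT.2]
    · exact ⟨1, one_pos, fun l hl => absurd ⟨l, hl⟩ hT'⟩
  -- KEY estimate
  have key : ∀ ε : ℝ, 0 < ε → ∃ t₁ : ℝ, 0 < t₁ ∧ ∀ u : ℝ, t₁ ≤ u →
      (M₀ ≤ m * u ∧ M₁ ≤ m * u ∧ ∀ t : ℝ, |t| = u →
        |α * f (m * t) + β * f (-m * t)| ≤ ε * |f (m * u)|) := by
    intro ε hε
    have hε' : 0 < ε / (C + 1) := by positivity
    obtain ⟨M, hM⟩ := hrapid (ε / (C + 1)) hε'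
    refine ⟨(|M₀| + |M₁| + |M| + 1) / m + (|M| + 1) / δ, by positivity, ?_⟩
    intro u hu
    have hu0 : 0 < u := lt_of_lt_of_le (by positivity) hu
    have hmu : |M₀| + |M₁| + |M| + 1 ≤ m * u := by
      have h0 : 0 ≤ (|M| + 1) / δ := by positivity
      have h1 : (|M₀| + |M₁| + |M| + 1) / m ≤ u := by linarith
      calc |M₀| + |M₁| + |M| + 1 = ((|M₀| + |M₁| + |M| + 1) / m) * m := by field_simp
        _ ≤ u * m := mul_le_mul_of_nonneg_right h1 hm0.le
        _ = m * u := mul_comm _ _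
    have habs0 := le_abs_self M₀
    have habs1 := le_abs_self M₁
    have habsM := le_abs_self M
    have hn0 := abs_nonneg M₀
    have hn1 := abs_nonneg M₁
    have hnM := abs_nonneg M
    refine ⟨by linarith, by linarith, ?_⟩
    intro t ht
    have hmu0 : 0 < m * u := by positivity
    have hδu : (|M| + 1) ≤ δ * u := by
      have h0 : 0 ≤ (|M₀| + |M₁| + |M| + 1) / m := by positivity
      have h1 : (|M| + 1) / δ ≤ u := by linarith
      calc |M| + 1 = ((|M| + 1) / δ) * δ := by field_simp
        _ ≤ u * δ := mul_le_mul_of_nonneg_right h1 hδ0.le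
        _ = δ * u := mul_comm _ _
    have hterm : ∀ l ∈ T, |f (b l * t)| ≤ ε / (C + 1) * |f (m * u)| := by
      intro l hl
      simp only [hT, Finset.mem_filter] at hl
      have hbl := hl.2
      have habsb : |b l * t| = |b l| * u := by rw [abs_mul, ht]
      have habsx : |m * u| = m * u := abs_of_pos hmu0
      apply hM (m * u) (b l * t)
      · rw [habsx]; linarith
      · rw [habsb]
        have : m * u ≤ |b l| * u := mul_le_mul_of_nonneg_right hbl.le hu0.le
        linarith
      · rw [habsb, habsx]
        have h1 : δ * u ≤ (|b l| - m) * u :=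
          mul_le_mul_of_nonneg_right (hδle l (by simp [hT, hbl])) hu0.le
        have : |b l| * u - m * u = (|b l| - m) * u := by ring
        linarith
    have hsumT : |∑ l ∈ T, cc l * f (b l * t)| ≤ ε * |f (m * u)| := by
      calc |∑ l ∈ T, cc l * f (b l * t)| ≤ ∑ l ∈ T, |cc l * f (b l * t)| :=
            Finset.abs_sum_le_sum_abs _ _
        _ ≤ ∑ l ∈ T, |cc l| * (ε / (C + 1) * |f (m * u)|) := by
            apply Finset.sum_le_sum
            intro l hl
            rw [abs_mul]
            exact mul_le_mul_of_nonneg_left (hterm l hl) (abs_nonneg _)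
        _ = (∑ l ∈ T, |cc l|) * (ε / (C + 1) * |f (m * u)|) := by rw [Finset.sum_mul]
        _ ≤ C * (ε / (C + 1) * |f (m * u)|) := by
            apply mul_le_mul_of_nonneg_right _ (by positivity)
            exact Finset.sum_le_sum_of_subset_of_nonneg (Finset.subset_univ _)
              (fun _ _ _ => abs_nonneg _)
        _ ≤ ε * |f (m * u)| := by
            rw [div_mul_eq_mul_div, mul_comm ε, ← mul_div_assoc]
            rw [div_le_iff₀ (by positivity)]
            nlinarith [abs_nonneg (f (m * u)), mul_nonneg hC0 (abs_nonneg (f (m*u)))]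
    rw [eqA t, abs_neg]
    exact hsumT
  -- main estimates
  have hstep : ∀ x y : ℝ, (∀ ε : ℝ, 0 < ε → ∃ u : ℝ,
      |x * f (m * u) + y * f (-m * u)| ≤ ε * |f (m * u)| ∧ M₀ ≤ m * u ∧ M₁ ≤ m * u ∧ 0 < u) →
      |x| ≤ |y| / c' := by
    intro x y h
    apply le_of_forall_pos_le_add
    intro ε hε
    obtain ⟨u, hbd, hM₀u, hM₁u, hu0⟩ := h ε hε
    have hmu0 : 0 < m * u := by positivity
    have hF : 0 < |f (m * u)| := abs_pos.mpr (hnz _ (by rw [abs_of_pos hmu0]; exact hM₀u))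
    have hsymu := hsym (m * u) hM₁u
    have hfneg : |f (-m * u)| ≤ |f (m * u)| / c' := by
      rw [le_div_iff₀ (by linarith)]
      have : -m * u = -(m * u) := by ring
      rw [this]
      linarith
    have h2 : |x| * |f (m * u)| ≤ |y| * |f (-m * u)| + ε * |f (m * u)| := by
      have e1 : True := trivial
      calc |x| * |f (m * u)| = |x * f (m * u)| := (abs_mul _ _).symm
        _ = |(x * f (m * u) + y * f (-m * u)) - y * f (-m * u)| := by
            rw [add_sub_cancel_right]
        _ ≤ |x * f (m * u) + y * f (-m * u)| + |y * f (-m * u)| := abs_sub _ _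
        _ ≤ ε * |f (m * u)| + |y| * |f (-m * u)| := by
            rw [abs_mul]; exact add_le_add hbd le_rfl
        _ = |y| * |f (-m * u)| + ε * |f (m * u)| := by ring
    have h3 : |x| * |f (m * u)| ≤ (|y| / c' + ε) * |f (m * u)| := by
      have h4 : |y| * |f (-m * u)| ≤ |y| * (|f (m * u)| / c') :=
        mul_le_mul_of_nonneg_left hfneg (abs_nonneg _)
      have h5 : |y| * (|f (m * u)| / c') = |y| / c' * |f (m * u)| := by ring
      nlinarith
    exact le_of_mul_le_mul_right (by linarith) hF
  have hαβ : |α| ≤ |β| / c' := by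
    apply hstep
    intro ε hε
    obtain ⟨t₁, ht₁0, hkey⟩ := key ε hε
    obtain ⟨hM₀u, hM₁u, hbound⟩ := hkey t₁ le_rfl
    exact ⟨t₁, hbound t₁ (abs_of_pos ht₁0), hM₀u, hM₁u, ht₁0⟩
  have hβα : |β| ≤ |α| / c' := by
    apply hstep
    intro ε hε
    obtain ⟨t₁, ht₁0, hkey⟩ := key ε hε
    obtain ⟨hM₀u, hM₁u, hbound⟩ := hkey t₁ le_rfl
    have hb := hbound (-t₁) (by rw [abs_neg, abs_of_pos ht₁0])
    refine ⟨t₁, ?_, hM₀u, hM₁u, ht₁0⟩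
    have e1 : m * -t₁ = -m * t₁ := by ring
    have e2 : -m * -t₁ = m * t₁ := by ring
    rw [e1, e2] at hb
    calc |β * f (m * t₁) + α * f (-m * t₁)|
        = |α * f (-m * t₁) + β * f (m * t₁)| := by rw [add_comm]
      _ ≤ ε * |f (m * t₁)| := hb
  have hc'0 : (0:ℝ) < c' := by linarith
  rw [le_div_iff₀ hc'0] at hαβ hβα
  have hα0 : α = 0 := by
    have h1 : |α| ≤ 0 := by nlinarith [abs_nonneg α, abs_nonneg β,
      mul_le_mul_of_nonneg_right hαβ hc'0.le]
    exact abs_eq_zero.mp (le_antisymm h1 (abs_nonneg α))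
  have hβ0 : β = 0 := by
    have h1 : |β| ≤ 0 := by nlinarith [abs_nonneg α, abs_nonneg β,
      mul_le_mul_of_nonneg_right hβα hc'0.le]
    exact abs_eq_zero.mp (le_antisymm h1 (abs_nonneg β))
  have hccp : cc p ≠ 0 := by simpa [hS] using hpS
  rcases (abs_eq hm0.le).mp hm.symm with hbp | hbp
  · have heq : α = cc p := by
      rw [hα]
      apply Finset.sum_eq_single_of_mem p (by simp [hP, hbp])
      intro l hl hlp
      exfalso
      apply hlp
      apply hbinj
      simp only [hP, Finset.mem_filter] at hl
      rw [hl.2, hbp]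
    exact hccp (by rw [← heq, hα0])
  · have heq : β = cc p := by
      rw [hβ]
      apply Finset.sum_eq_single_of_mem p (by simp [hQ, hbp])
      intro l hl hlp
      exfalso
      apply hlp
      apply hbinj
      simp only [hQ, Finset.mem_filter] at hl
      rw [hl.2, hbp]
    exact hccp (by rw [← heq, hβ0])

lemma iteratedDeriv_zero_fun' (n : ℕ) : iteratedDeriv n (fun _ : ℝ => (0:ℝ)) = fun _ => 0 := by
  induction n with
  | zero => simp [iteratedDeriv_zero]
  | succ n ih =>
    rw [iteratedDeriv_succ, ih]
    funext x
    simp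

lemma iteratedDeriv_finset_sum' {ι : Type*} (n : ℕ) (s : Finset ι) (F : ι → ℝ → ℝ)
    (hF : ∀ i ∈ s, ContDiff ℝ n (F i)) :
    iteratedDeriv n (fun t => ∑ i ∈ s, F i t) = fun t => ∑ i ∈ s, iteratedDeriv n (F i) t := by
  classical
  induction s using Finset.induction_on with
  | empty => simpa using iteratedDeriv_zero_fun' n
  | @insert a s ha ih =>
    have hFa : ContDiff ℝ n (F a) := hF a (Finset.mem_insert_self a s)
    have hFs : ∀ i ∈ s, ContDiff ℝ n (F i) := fun i hi => hF i (Finset.mem_insert_of_mem hi)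
    have hsum : ContDiff ℝ n (fun t => ∑ i ∈ s, F i t) := ContDiff.sum hFs
    funext x
    have e1 : (fun t => ∑ i ∈ insert a s, F i t) = F a + fun t => ∑ i ∈ s, F i t := by
      funext t
      simp [Finset.sum_insert ha]
    rw [e1, ← iteratedDerivWithin_univ, iteratedDerivWithin_add (Set.mem_univ x)
      uniqueDiffOn_univ hFa.contDiffWithinAt hsum.contDiffWithinAt,
      iteratedDerivWithin_univ, iteratedDerivWithin_univ, ih hFs]
    simp [Finset.sum_insert ha]

theorem stmt7 (σ : ℝ → ℝ) (s : ℕ) (hσ : ContDiff ℝ s σ)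
    (hnz : ∃ M₀ : ℝ, ∀ x : ℝ, M₀ ≤ |x| → iteratedDeriv s σ x ≠ 0)
    (hrapid : ∀ ε : ℝ, 0 < ε → ∃ M : ℝ, ∀ x y : ℝ,
      M ≤ |x| → M ≤ |y| → M ≤ |y| - |x| →
        |iteratedDeriv s σ y| ≤ ε * |iteratedDeriv s σ x|)
    (c : ℝ) (hc : 1 < c)
    (hsym :
      c ≤ Filter.liminf
            (fun x => |iteratedDeriv s σ x| / |iteratedDeriv s σ (-x)|) Filter.atTop ∨
      c ≤ Filter.liminf
            (fun x => |iteratedDeriv s σ x| / |iteratedDeriv s σ (-x)|) Filter.atBot)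
    (d r : ℕ) (w : Fin r → EuclideanSpace ℝ (Fin d))
    (hw : Function.Injective w) (hw0 : ∀ k, w k ≠ 0) :
    LinearIndependent ℝ
      (fun k => fun x : EuclideanSpace ℝ (Fin d) => σ (inner ℝ (w k) x : ℝ)) := by
  classical
  obtain ⟨M₀, hM₀⟩ := hnz
  set f : ℝ → ℝ := iteratedDeriv s σ with hf
  rw [Fintype.linearIndependent_iff]
  intro g hg
  obtain ⟨v, hv⟩ := exists_inner_ne_zero (Finset.univ : Finset (Fin r × Fin r))
      (fun pq => if pq.1 = pq.2 then w pq.1 else w pq.1 - w pq.2)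
  set b : Fin r → ℝ := fun k => inner ℝ (w k) v with hb
  have hb0 : ∀ k, b k ≠ 0 := by
    intro k
    have := hv (k, k) (Finset.mem_univ _) (by simpa using hw0 k)
    simpa using this
  have hbinj : Function.Injective b := by
    intro k j hkj
    by_contra hne
    have hwkj : w k - w j ≠ 0 := sub_ne_zero.mpr (fun h => hne (hw h))
    have h2 := hv (k, j) (Finset.mem_univ _) (by simpa [hne] using hwkj)
    simp only [if_neg hne] at h2
    apply h2
    rw [inner_sub_left]
    have : (inner ℝ (w k) v : ℝ) = inner ℝ (w j) v := hkj
    rw [this, sub_self]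
  -- pointwise identity on the line t • v
  have hpt : ∀ t : ℝ, ∑ k, g k * σ (b k * t) = 0 := by
    intro t
    have h0 := congrFun hg (t • v)
    simp only [Finset.sum_apply, Pi.smul_apply, smul_eq_mul, Pi.zero_apply] at h0
    rw [← h0]
    apply Finset.sum_congr rfl
    intro k _
    have : (inner ℝ (w k) (t • v) : ℝ) = b k * t := by
      rw [real_inner_smul_right, mul_comm]
    rw [this]
  -- differentiate s times
  have hcd : ∀ k : Fin r, ContDiff ℝ s (fun t : ℝ => σ (b k * t)) := by
    intro k
    exact hσ.comp (contDiff_const.mul contDiff_id)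
  have hcd2 : ∀ k : Fin r, ContDiff ℝ s (fun t : ℝ => g k * σ (b k * t)) :=
    fun k => contDiff_const.mul (hcd k)
  have hone : ∀ k : Fin r, ∀ τ : ℝ, iteratedDeriv s (fun t => g k * σ (b k * t)) τ
      = g k * (b k ^ s * f (b k * τ)) := by
    intro k τ
    have e1 : iteratedDeriv s (fun t => g k * σ (b k * t)) τ
        = g k * iteratedDeriv s (fun t => σ (b k * t)) τ := by
      have h' := iteratedDerivWithin_const_mul (Set.mem_univ τ) uniqueDiffOn_univ (g k)
        (hcd k).contDiffWithinAt
      simpa [iteratedDerivWithin_univ] using h'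
    rw [e1, iteratedDeriv_comp_const_mul hσ (b k)]
  have hder : ∀ t : ℝ, ∑ k, (g k * b k ^ s) * f (b k * t) = 0 := by
    intro t
    have h1 : (fun t : ℝ => ∑ k, g k * σ (b k * t)) = fun _ => 0 := funext hpt
    have h2 : (0:ℝ) = ∑ k, (g k * b k ^ s) * f (b k * t) := by
      calc (0:ℝ) = iteratedDeriv s (fun t : ℝ => ∑ k, g k * σ (b k * t)) t := by
            rw [h1, iteratedDeriv_zero_fun']
        _ = ∑ k, iteratedDeriv s (fun t => g k * σ (b k * t)) t :=
            congrFun (iteratedDeriv_finset_sum' s Finset.univ _ (fun k _ => hcd2 k)) t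
        _ = ∑ k, (g k * b k ^ s) * f (b k * t) :=
            Finset.sum_congr rfl (fun k _ => by rw [hone k t]; ring)
    exact h2.symm
  set cc : Fin r → ℝ := fun k => g k * b k ^ s with hcc
  set c' : ℝ := (1 + c) / 2 with hc'def
  have hc'1 : 1 < c' := by rw [hc'def]; linarith
  have hc'c : c' < c := by rw [hc'def]; linarith
  have hc'0 : 0 < c' := by linarith
  have hcc0 : ∀ k, cc k = 0 := by
    rcases hsym with hsymT | hsymB
    · -- atTop case
      have hev : ∀ᶠ x in atTop, c' ≤ |f x| / |f (-x)| :=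
        eventually_ge_of_le_liminf' hsymT hc'c hc'0
      obtain ⟨M₁, hM₁⟩ := eventually_atTop.mp hev
      have hsym' : ∀ x : ℝ, max M₁ (|M₀| + 1) ≤ x → c' * |f (-x)| ≤ |f x| := by
        intro x hx
        have hx1 : M₁ ≤ x := le_trans (le_max_left _ _) hx
        have hx2 : |M₀| + 1 ≤ x := le_trans (le_max_right _ _) hx
        have hx0 : 0 < x := lt_of_lt_of_le (by positivity) hx2
        have h1 : c' ≤ |f x| / |f (-x)| := hM₁ x hx1
        have h2 : f (-x) ≠ 0 := by
          apply hM₀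
          rw [abs_neg, abs_of_pos hx0]
          linarith [le_abs_self M₀]
        exact (le_div_iff₀ (abs_pos.mpr h2)).mp h1
      exact core_lemma f M₀ hM₀ hrapid c' hc'1 _ hsym' b hbinj hb0 cc hder
    · -- atBot case
      have hev : ∀ᶠ x in atBot, c' ≤ |f x| / |f (-x)| :=
        eventually_ge_of_le_liminf' hsymB hc'c hc'0
      obtain ⟨M₂, hM₂⟩ := eventually_atBot.mp hev
      set F : ℝ → ℝ := fun x => f (-x) with hF
      have hnzF : ∀ x : ℝ, M₀ ≤ |x| → F x ≠ 0 := by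
        intro x hx
        exact hM₀ (-x) (by rwa [abs_neg])
      have hrapidF : ∀ ε : ℝ, 0 < ε → ∃ M : ℝ, ∀ x y : ℝ, M ≤ |x| → M ≤ |y| →
          M ≤ |y| - |x| → |F y| ≤ ε * |F x| := by
        intro ε hε
        obtain ⟨M, hM⟩ := hrapid ε hε
        refine ⟨M, fun x y hx hy hxy => ?_⟩
        have := hM (-x) (-y) (by rwa [abs_neg]) (by rwa [abs_neg])
          (by rwa [abs_neg, abs_neg])
        simpa [hF] using this
      have hsymF : ∀ x : ℝ, max (-M₂) (|M₀| + 1) ≤ x → c' * |F (-x)| ≤ |F x| := by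
        intro x hx
        have hx1 : -M₂ ≤ x := le_trans (le_max_left _ _) hx
        have hx2 : |M₀| + 1 ≤ x := le_trans (le_max_right _ _) hx
        have hx0 : 0 < x := lt_of_lt_of_le (by positivity) hx2
        have h1 : c' ≤ |f (-x)| / |f (-(-x))| := hM₂ (-x) (by linarith)
        rw [neg_neg] at h1
        have h2 : f x ≠ 0 := by
          apply hM₀
          rw [abs_of_pos hx0]
          linarith [le_abs_self M₀]
        have h3 : c' * |f x| ≤ |f (-x)| := (le_div_iff₀ (abs_pos.mpr h2)).mp h1
        simpa [hF, neg_neg] using h3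
      set B : Fin r → ℝ := fun k => -(b k) with hB
      have hbinjB : Function.Injective B := by
        intro k j h
        apply hbinj
        have : -(b k) = -(b j) := h
        exact neg_inj.mp this
      have hb0B : ∀ k, B k ≠ 0 := fun k => neg_ne_zero.mpr (hb0 k)
      have hsumB : ∀ t : ℝ, ∑ k, cc k * F (B k * t) = 0 := by
        intro t
        have e : ∀ k : Fin r, F (B k * t) = f (b k * t) := by
          intro k
          show f (-(-(b k) * t)) = f (b k * t)
          norm_num
        calc ∑ k, cc k * F (B k * t) = ∑ k, cc k * f (b k * t) :=
              Finset.sum_congr rfl (fun k _ => by rw [e k])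
          _ = 0 := hder t
      exact core_lemma F M₀ hnzF hrapidF c' hc'1 _ hsymF B hbinjB hb0B cc hsumB
  intro k
  have h2 : g k * b k ^ s = 0 := hcc0 k
  exact (mul_eq_zero.mp h2).resolve_right (pow_ne_zero s (hb0 k))
end

section
/- Let f : ℝ^s × ℝ^d → ℝ be real analytic and suppose that for every z in a set E ⊆ ℝ^s, the map x ↦ f(z, x) is not identically zero. Then for almost every x ∈ ℝ^d, the set {z ∈ E : f(z, x) = 0} is contained in the zero set of a nonzero analytic function of z; moreover, given n > s prescribed points x_1, …, x_n ∈ ℝ^d and ε > 0, there exist x_1', …, x_n' with |x_i' − x_i| < ε such that {z ∈ E : f(z, x_1') = ⋯ = f(z, x_n') = 0} is empty. -/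
open MeasureTheory Set Topology Filter
open scoped ENNReal

noncomputable def insCLM (σ : ℕ) (i : Fin (σ+1)) : (ℝ × (Fin σ → ℝ)) →L[ℝ] (Fin (σ+1) → ℝ) :=
  ContinuousLinearMap.pi (i.insertNth (ContinuousLinearMap.fst ℝ ℝ (Fin σ → ℝ))
    (fun k => (ContinuousLinearMap.proj k).comp (ContinuousLinearMap.snd ℝ ℝ (Fin σ → ℝ))))

lemma insCLM_apply (σ : ℕ) (i : Fin (σ+1)) (t : ℝ) (w : Fin σ → ℝ) :
    insCLM σ i (t, w) = i.insertNth t w := by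
  funext q
  refine Fin.succAboveCases i ?_ ?_ q
  · simp [insCLM, Fin.insertNth_apply_same]
  · intro k
    simp [insCLM, Fin.insertNth_apply_succAbove]

lemma analytic_insert_pair (σ : ℕ) (i : Fin (σ+1)) :
    AnalyticOnNhd ℝ (fun p : ℝ × (Fin σ → ℝ) => (i.insertNth p.1 p.2 : Fin (σ+1) → ℝ)) univ := by
  have h1 : AnalyticOnNhd ℝ (fun p : ℝ × (Fin σ → ℝ) => insCLM σ i p) univ :=
    (insCLM σ i).analyticOnNhd univ
  have : (fun p : ℝ × (Fin σ → ℝ) => insCLM σ i p)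
      = fun p : ℝ × (Fin σ → ℝ) => (i.insertNth p.1 p.2 : Fin (σ+1) → ℝ) := by
    funext p; exact insCLM_apply σ i p.1 p.2
  rwa [this] at h1

lemma analytic_insert_left (σ : ℕ) (i : Fin (σ+1)) (w₀ : Fin σ → ℝ) :
    AnalyticOnNhd ℝ (fun t : ℝ => (i.insertNth t w₀ : Fin (σ+1) → ℝ)) univ :=
  (analytic_insert_pair σ i).comp (analyticOnNhd_id.prod analyticOnNhd_const) (mapsTo_univ _ _)

lemma analytic_insert_right (σ : ℕ) (i : Fin (σ+1)) (t₀ : ℝ) :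
    AnalyticOnNhd ℝ (fun w : Fin σ → ℝ => (i.insertNth t₀ w : Fin (σ+1) → ℝ)) univ :=
  (analytic_insert_pair σ i).comp (analyticOnNhd_const.prod analyticOnNhd_id) (mapsTo_univ _ _)

/-- 1-D: zeros of a not-identically-zero analytic function are countable. -/
lemma countable_zeros_1d {h : ℝ → ℝ} (hh : AnalyticOnNhd ℝ h univ) {t₀ : ℝ} (h0 : h t₀ ≠ 0) :
    {t : ℝ | h t = 0}.Countable := by
  set S := {t : ℝ | h t = 0} with hS
  have hiso : ∀ z ∈ S, ∃ U : Set ℝ, IsOpen U ∧ z ∈ U ∧ U ∩ S = {z} := by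
    intro z hz
    rcases (hh z trivial).eventually_eq_zero_or_eventually_ne_zero with hev | hev
    · exfalso
      have := hh.eqOn_zero_of_preconnected_of_eventuallyEq_zero isPreconnected_univ
        (z₀ := z) trivial (by filter_upwards [hev] with t ht using ht)
      exact h0 (this trivial)
    · rw [eventually_nhdsWithin_iff] at hev
      rcases eventually_nhds_iff.1 hev with ⟨U, hU, hUo, hzU⟩
      refine ⟨U, hUo, hzU, ?_⟩
      apply Subset.antisymm
      · rintro t ⟨htU, htS⟩
        by_contra hne
        exact (hU t htU (by simpa using hne)) htS
      · rintro t rfl; exact ⟨hzU, hz⟩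
  haveI : DiscreteTopology ↥S := by
    rw [discreteTopology_iff_isOpen_singleton]
    rintro ⟨z, hz⟩
    rcases hiso z hz with ⟨U, hUo, hzU, hUS⟩
    have : {(⟨z, hz⟩ : ↥S)} = (Subtype.val) ⁻¹' U := by
      ext ⟨t, ht⟩
      simp only [mem_singleton_iff, Subtype.mk_eq_mk, mem_preimage]
      constructor
      · rintro rfl; exact hzU
      · intro htU
        have : t ∈ U ∩ S := ⟨htU, ht⟩
        rw [hUS] at this; exact this
    rw [this]
    exact hUo.preimage continuous_subtype_val
  have : Countable ↥S := TopologicalSpace.separableSpace_iff_countable.1 inferInstance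
  exact Set.countable_coe_iff.1 this

/-- Zero set of a not-identically-zero analytic function on ℝ^m is Lebesgue-null. -/
lemma volume_zeros : ∀ (m : ℕ) (g : (Fin m → ℝ) → ℝ), AnalyticOnNhd ℝ g univ →
    ∀ z₀ : Fin m → ℝ, g z₀ ≠ 0 → volume {z : Fin m → ℝ | g z = 0} = 0 := by
  intro m
  induction m with
  | zero =>
    intro g hg z₀ h0
    haveI : Subsingleton (Fin 0 → ℝ) := ⟨fun a b => funext fun i => i.elim0⟩
    have : {z : Fin 0 → ℝ | g z = 0} = ∅ := by
      ext z
      simp only [mem_setOf_eq, mem_empty_iff_false, iff_false]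
      rw [Subsingleton.elim z z₀]; exact h0
    simp [this]
  | succ m IH =>
    intro g hg z₀ h0
    set Z := {z : Fin (m+1) → ℝ | g z = 0} with hZdef
    have hgc : Continuous g := by
      have := hg.continuousOn; rwa [continuousOn_univ] at this
    have hZm : MeasurableSet Z := (isClosed_singleton.preimage hgc).measurableSet
    set e := MeasurableEquiv.piFinSuccAbove (fun _ : Fin (m+1) => ℝ) 0 with he
    have mp := volume_preserving_piFinSuccAbove (fun _ : Fin (m+1) => ℝ) 0
    have himg : MeasurableSet (e '' Z) := e.measurableSet_image.2 hZm
    have hZvol : volume Z = volume (e '' Z) := by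
      conv_lhs => rw [← Equiv.preimage_image e.toEquiv Z]
      exact mp.measure_preimage himg.nullMeasurableSet
    rw [hZvol]
    rw [Measure.volume_eq_prod]
    rw [Measure.measure_prod_null himg]
    -- the slice function in the t-direction
    set w₀ : Fin m → ℝ := fun j => z₀ ((0 : Fin (m+1)).succAbove j) with hw₀
    set φ : ℝ → ℝ := fun t => g ((0 : Fin (m+1)).insertNth t w₀) with hφ
    have hφa : AnalyticOnNhd ℝ φ univ :=
      hg.comp (analytic_insert_left m 0 w₀) (mapsTo_univ _ _)
    have hφ0 : φ (z₀ 0) ≠ 0 := by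
      have : (0 : Fin (m+1)).insertNth (z₀ 0) w₀ = z₀ := by
        funext q
        refine Fin.succAboveCases 0 ?_ ?_ q
        · rw [Fin.insertNth_apply_same]
        · intro k; rw [Fin.insertNth_apply_succAbove]
      rw [hφ]; simpa [this] using h0
    have hN : volume {t : ℝ | φ t = 0} = 0 :=
      (countable_zeros_1d hφa hφ0).measure_zero _
    have hae : ∀ᵐ t : ℝ, φ t ≠ 0 := by
      rw [ae_iff]; simpa using hN
    filter_upwards [hae] with t ht
    have hsec : Prod.mk t ⁻¹' (e '' Z) = {w : Fin m → ℝ | g ((0 : Fin (m+1)).insertNth t w) = 0} := by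
      ext w
      simp only [mem_preimage, mem_setOf_eq]
      rw [MeasurableEquiv.image_eq_preimage_symm]
      simp only [mem_preimage]
      have : e.symm (t, w) = (0 : Fin (m+1)).insertNth t w := by
        rw [he, MeasurableEquiv.piFinSuccAbove_symm_apply]
        rfl
      rw [this]
      exact Iff.rfl
    show volume (Prod.mk t ⁻¹' (e '' Z)) = 0
    rw [hsec]
    exact IH (fun w => g ((0 : Fin (m+1)).insertNth t w))
      (hg.comp (analytic_insert_right m 0 t) (mapsTo_univ _ _)) w₀ ht

section chart
variable {τ : ℕ}

/-- Analytic implicit-function chart: near a point where an analytic function `h` has a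
nonvanishing derivative, the zero set of `h` is covered by an analytic image of ℝ^τ. -/
lemma chart_lemma {O : Set (Fin (τ+1) → ℝ)} (hO : IsOpen O)
    {h : (Fin (τ+1) → ℝ) → ℝ} (hh : AnalyticOnNhd ℝ h O)
    {z₀ : Fin (τ+1) → ℝ} (hz₀ : z₀ ∈ O) {v₀ : Fin (τ+1) → ℝ}
    (hd : fderiv ℝ h z₀ v₀ ≠ 0) :
    ∃ (W : Set (Fin (τ+1) → ℝ)) (U' : Set (Fin τ → ℝ)) (ψ : (Fin τ → ℝ) → (Fin (τ+1) → ℝ)),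
      IsOpen W ∧ z₀ ∈ W ∧ IsOpen U' ∧ AnalyticOnNhd ℝ ψ U' ∧ ψ '' U' ⊆ O ∧
      ∀ z ∈ W, h z = 0 → z ∈ ψ '' U' := by
  classical
  set D := fderiv ℝ h z₀ with hD
  -- find a coordinate direction with nonvanishing derivative
  have hj : ∃ j : Fin (τ+1), D (Pi.single j 1) ≠ 0 := by
    by_contra hc
    push_neg at hc
    apply hd
    have hv : v₀ = ∑ q : Fin (τ+1), v₀ q • (Pi.single q (1:ℝ) : Fin (τ+1) → ℝ) := by
      funext r
      rw [Finset.sum_apply]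
      simp [Pi.single_apply, Finset.sum_ite_eq', mul_comm]
    rw [hv, map_sum]
    simp [_root_.map_smul, hc]
  obtain ⟨j, hj⟩ := hj
  set c : Fin (τ+1) → ℝ := Pi.single j 1 with hc
  set Pj : (Fin (τ+1) → ℝ) →L[ℝ] ℝ := ContinuousLinearMap.proj j with hPj
  set A : (Fin (τ+1) → ℝ) →L[ℝ] (Fin (τ+1) → ℝ) :=
    ContinuousLinearMap.id ℝ _ + (D - Pj).smulRight c with hA
  set FF : (Fin (τ+1) → ℝ) → (Fin (τ+1) → ℝ) := fun z => z + (h z - z j) • c with hFF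
  have hAapply : ∀ (x : Fin (τ+1) → ℝ) (q : Fin (τ+1)),
      A x q = x q + (D x - x j) * c q := by
    intro x q
    simp [hA, hPj, ContinuousLinearMap.smulRight_apply]
  have hFa : AnalyticOnNhd ℝ FF O := by
    apply analyticOnNhd_id.add
    exact (hh.sub (by exact Pj.analyticOnNhd O)).smul analyticOnNhd_const
  have hhz : AnalyticAt ℝ h z₀ := hh z₀ hz₀
  have hFd : HasFDerivAt FF A z₀ := by
    have h1 : HasFDerivAt h D z₀ := hhz.differentiableAt.hasFDerivAt
    have h2 : HasFDerivAt (fun z : Fin (τ+1) → ℝ => z j) Pj z₀ := by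
      exact Pj.hasFDerivAt (x := z₀)
    exact (hasFDerivAt_id z₀).add ((h1.sub h2).smul_const c)
  -- A is bijective
  have hker : ∀ x, A x = 0 → x = 0 := by
    intro x hx
    have hq : ∀ q, q ≠ j → x q = 0 := by
      intro q hqj
      have h1 : A x q = 0 := by rw [hx]; rfl
      rw [hAapply] at h1
      simpa [hc, Pi.single_apply, hqj] using h1
    have hDx : D x = 0 := by
      have h1 : A x j = 0 := by rw [hx]; rfl
      rw [hAapply] at h1
      simp [hc] at h1
      linarith
    have hxs : x = x j • c := by
      funext q
      rcases eq_or_ne q j with rfl | hqj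
      · simp [hc]
      · simp [hc, hq q hqj, Pi.single_apply, hqj]
    have h5 : D x = x j • D c := by
      nth_rewrite 1 [hxs]
      exact _root_.map_smul D _ _
    rw [hDx, smul_eq_mul] at h5
    have hxj : x j = 0 := by
      rcases mul_eq_zero.1 h5.symm with h' | h'
      · exact h'
      · exact absurd h' hj
    rw [hxs, hxj, zero_smul]
  have hinj : Function.Injective A := by
    intro u v huv
    have : A (u - v) = 0 := by rw [map_sub, huv, sub_self]
    have := hker _ this
    exact sub_eq_zero.1 this
  have hsurj : Function.Surjective A := by
    have := (LinearMap.injective_iff_surjective (f := (A : (Fin (τ+1) → ℝ) →ₗ[ℝ] (Fin (τ+1) → ℝ)))).1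
    exact this hinj
  set eL : (Fin (τ+1) → ℝ) ≃L[ℝ] (Fin (τ+1) → ℝ) :=
    (LinearEquiv.ofBijective (A : (Fin (τ+1) → ℝ) →ₗ[ℝ] (Fin (τ+1) → ℝ))
      ⟨hinj, hsurj⟩).toContinuousLinearEquiv with heL
  have heLcoe : (eL : (Fin (τ+1) → ℝ) →L[ℝ] (Fin (τ+1) → ℝ)) = A := by
    ext v
    simp [heL]
    rfl
  have hfder : fderiv ℝ FF z₀ = (eL : (Fin (τ+1) → ℝ) →L[ℝ] (Fin (τ+1) → ℝ)) := by
    rw [hFd.fderiv, heLcoe]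
  have hstrict : HasStrictFDerivAt FF
      (eL : (Fin (τ+1) → ℝ) →L[ℝ] (Fin (τ+1) → ℝ)) z₀ := by
    have := (hFa z₀ hz₀).hasStrictFDerivAt
    rwa [hfder] at this
  set PH := hstrict.toOpenPartialHomeomorph FF with hPH
  have hPHcoe : ⇑PH = FF := hstrict.toOpenPartialHomeomorph_coe
  have hsrc : z₀ ∈ PH.source := hstrict.mem_toOpenPartialHomeomorph_source
  have htgt : FF z₀ ∈ PH.target := by
    have := PH.map_source hsrc
    rwa [hPHcoe] at this
  have hz₀back : PH.symm (FF z₀) = z₀ := by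
    have := PH.left_inv hsrc
    rwa [hPHcoe] at this
  have hsymm_an : AnalyticAt ℝ (↑PH.symm) (FF z₀) := by
    have := PH.analyticAt_symm' (i := eL) hsrc (by rw [hPHcoe]; exact hFa z₀ hz₀)
      (by rw [hPHcoe]; exact hfder)
    rwa [hPHcoe] at this
  obtain ⟨V', hV'mem, hV'an⟩ := hsymm_an.exists_mem_nhds_analyticOnNhd
  have hcontsym : ContinuousAt (↑PH.symm) (FF z₀) :=
    PH.symm.continuousAt (by rwa [OpenPartialHomeomorph.symm_source])
  have hpre : (↑PH.symm) ⁻¹' (O ∩ PH.source) ∈ 𝓝 (FF z₀) := by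
    apply hcontsym.preimage_mem_nhds
    apply (hO.inter PH.open_source).mem_nhds
    rw [hz₀back]
    exact ⟨hz₀, hsrc⟩
  set Ω := interior (V' ∩ PH.target ∩ (↑PH.symm) ⁻¹' (O ∩ PH.source)) with hΩ
  have hΩo : IsOpen Ω := isOpen_interior
  have hΩz : FF z₀ ∈ Ω := by
    rw [hΩ, mem_interior_iff_mem_nhds]
    exact inter_mem (inter_mem hV'mem (PH.open_target.mem_nhds htgt)) hpre
  have hΩsub : Ω ⊆ V' ∩ PH.target ∩ (↑PH.symm) ⁻¹' (O ∩ PH.source) := interior_subset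
  set ι : (Fin τ → ℝ) → (Fin (τ+1) → ℝ) := fun w => (j.insertNth 0 w : Fin (τ+1) → ℝ) with hι
  have hιa : AnalyticOnNhd ℝ ι univ := analytic_insert_right τ j 0
  set U' : Set (Fin τ → ℝ) := ι ⁻¹' Ω with hU'
  have hU'o : IsOpen U' := hΩo.preimage (by
    have := hιa.continuousOn
    rwa [continuousOn_univ] at this)
  set ψ : (Fin τ → ℝ) → (Fin (τ+1) → ℝ) := fun w => PH.symm (ι w) with hψ
  have hψa : AnalyticOnNhd ℝ ψ U' := by
    apply hV'an.comp (hιa.mono (subset_univ U'))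
    intro w hw
    exact (hΩsub hw).1.1
  have hψsub : ψ '' U' ⊆ O := by
    rintro _ ⟨w, hw, rfl⟩
    exact ((hΩsub hw).2).1
  set W : Set (Fin (τ+1) → ℝ) := (O ∩ PH.source) ∩ FF ⁻¹' Ω with hW
  have hWo : IsOpen W := by
    apply ContinuousOn.isOpen_inter_preimage _ (hO.inter PH.open_source) hΩo
    exact (hFa.mono inter_subset_left).continuousOn
  have hz₀W : z₀ ∈ W := ⟨⟨hz₀, hsrc⟩, hΩz⟩
  refine ⟨W, U', ψ, hWo, hz₀W, hU'o, hψa, hψsub, ?_⟩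
  rintro z ⟨⟨hzO, hzsrc⟩, hzΩ⟩ hz0
  set w : Fin τ → ℝ := fun k => z (j.succAbove k) with hwdef
  have hιw : ι w = FF z := by
    funext q
    refine Fin.succAboveCases j ?_ ?_ q
    · rw [hι]
      show (j.insertNth 0 w : Fin (τ+1) → ℝ) j = z j + ((h z - z j) • c) j
      rw [Fin.insertNth_apply_same]
      simp [hc, hz0]
    · intro k
      show (j.insertNth 0 w : Fin (τ+1) → ℝ) (j.succAbove k)
        = z (j.succAbove k) + ((h z - z j) • c) (j.succAbove k)
      rw [Fin.insertNth_apply_succAbove]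
      simp [hc, Pi.single_apply, (Fin.succAbove_ne j k)]
      rfl
  have hwU' : w ∈ U' := by
    rw [hU', mem_preimage, hιw]
    exact hzΩ
  refine ⟨w, hwU', ?_⟩
  rw [hψ]
  show PH.symm (ι w) = z
  rw [hιw]
  have := PH.left_inv hzsrc
  rwa [hPHcoe] at this

end chart

section helpers

lemma isClosed_setOf_mem_and {α β : Type*} [TopologicalSpace α] [TopologicalSpace β]
    {A O : Set α} (hA : IsClosed A) (hO : IsOpen O) (hAO : A ⊆ O) {F : α → β}
    (hF : ContinuousOn F O) {T : Set β} (hT : IsClosed T) :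
    IsClosed {p | p ∈ A ∧ F p ∈ T} := by
  set S := {p | p ∈ A ∧ F p ∈ T} with hS
  rw [← closure_subset_iff_isClosed]
  intro p hp
  have hpA : p ∈ A := hA.closure_subset (closure_mono (fun q hq => hq.1) hp)
  have hcA : ContinuousWithinAt F S p :=
    (hF.continuousAt (hO.mem_nhds (hAO hpA))).continuousWithinAt
  have : F p ∈ closure (F '' S) := hcA.mem_closure_image hp
  have hsub : closure (F '' S) ⊆ T := by
    rw [← hT.closure_eq]
    exact closure_mono (by rintro _ ⟨q, hq, rfl⟩; exact hq.2)
  exact ⟨hpA, hsub this⟩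

variable {σ d : ℕ}

lemma slice_x {U : Set (Fin σ → ℝ)} {f : (Fin σ → ℝ) × (Fin d → ℝ) → ℝ}
    (hf : AnalyticOnNhd ℝ f (U ×ˢ (Set.univ : Set (Fin d → ℝ)))) {z : Fin σ → ℝ} (hz : z ∈ U) :
    AnalyticOnNhd ℝ (fun x => f (z, x)) univ :=
  hf.comp (analyticOnNhd_const.prod analyticOnNhd_id) (fun x _ => ⟨hz, trivial⟩)

lemma slice_z {U : Set (Fin σ → ℝ)} {f : (Fin σ → ℝ) × (Fin d → ℝ) → ℝ}
    (hf : AnalyticOnNhd ℝ f (U ×ˢ (Set.univ : Set (Fin d → ℝ)))) (x₁ : Fin d → ℝ) :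
    AnalyticOnNhd ℝ (fun z => f (z, x₁)) U :=
  hf.comp (analyticOnNhd_id.prod analyticOnNhd_const) (fun z hz => ⟨hz, trivial⟩)

lemma eval_preimage_null {m : ℕ} (i₀ : Fin (m+1)) {Z : Set (Fin d → ℝ)} (hZ : MeasurableSet Z)
    (hZ0 : volume Z = 0) : volume {x : Fin (m+1) → Fin d → ℝ | x i₀ ∈ Z} = 0 := by
  set e := MeasurableEquiv.piFinSuccAbove (fun _ : Fin (m+1) => (Fin d → ℝ)) i₀ with he
  have mp := volume_preserving_piFinSuccAbove (fun _ : Fin (m+1) => (Fin d → ℝ)) i₀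
  have hset : {x : Fin (m+1) → Fin d → ℝ | x i₀ ∈ Z}
      = e ⁻¹' (Z ×ˢ (univ : Set (Fin m → Fin d → ℝ))) := by
    ext x
    simp [he, MeasurableEquiv.piFinSuccAbove_apply]
  rw [hset, mp.measure_preimage (hZ.prod MeasurableSet.univ).nullMeasurableSet,
    Measure.volume_eq_prod, Measure.prod_prod, hZ0, zero_mul]

lemma pi_null_of_sections {m : ℕ} {B : Set (Fin (m+1) → Fin d → ℝ)} (hB : MeasurableSet B)
    (hae : ∀ᵐ x₁ : Fin d → ℝ, volume {x' : Fin m → Fin d → ℝ |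
      ((0 : Fin (m+1)).insertNth x₁ x' : Fin (m+1) → Fin d → ℝ) ∈ B} = 0) : volume B = 0 := by
  set e := MeasurableEquiv.piFinSuccAbove (fun _ : Fin (m+1) => (Fin d → ℝ)) 0 with he
  have mp := volume_preserving_piFinSuccAbove (fun _ : Fin (m+1) => (Fin d → ℝ)) 0
  have himg : MeasurableSet (e '' B) := e.measurableSet_image.2 hB
  have h1 : volume B = volume (e '' B) := by
    conv_lhs => rw [← Equiv.preimage_image e.toEquiv B]
    exact mp.measure_preimage himg.nullMeasurableSet
  rw [h1, Measure.volume_eq_prod, Measure.measure_prod_null himg]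
  filter_upwards [hae] with x₁ hx₁
  have hsec : Prod.mk x₁ ⁻¹' (e '' B)
      = {x' : Fin m → Fin d → ℝ | ((0 : Fin (m+1)).insertNth x₁ x' : Fin (m+1) → Fin d → ℝ) ∈ B} := by
    ext x'
    rw [mem_preimage, MeasurableEquiv.image_eq_preimage_symm, mem_preimage]
    have : e.symm (x₁, x') = (0 : Fin (m+1)).insertNth x₁ x' := by
      rw [he, MeasurableEquiv.piFinSuccAbove_symm_apply]
      rfl
    rw [this]
    exact Iff.rfl
  show volume (Prod.mk x₁ ⁻¹' (e '' B)) = 0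
  rw [hsec]
  exact hx₁

lemma bad_measurable {n : ℕ} {V : Set (Fin σ → ℝ)} (hV : IsOpen V)
    {f : (Fin σ → ℝ) × (Fin d → ℝ) → ℝ}
    (hf : ContinuousOn f (V ×ˢ (univ : Set (Fin d → ℝ)))) :
    MeasurableSet {x : Fin n → Fin d → ℝ | ∃ z ∈ V, ∀ i, f (z, x i) = 0} := by
  classical
  set K : ℕ → Set (Fin σ → ℝ) := fun k =>
    Metric.closedBall 0 k ∩ {z | ((k : ℝ≥0∞)+1)⁻¹ ≤ EMetric.infEdist z Vᶜ} with hK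
  have hKc : ∀ k, IsCompact (K k) := by
    intro k
    apply (isCompact_closedBall (0 : Fin σ → ℝ) k).inter_right
    exact isClosed_le continuous_const EMetric.continuous_infEdist
  have hKV : ∀ k, K k ⊆ V := by
    intro k z hz
    have hpos : (0 : ℝ≥0∞) < EMetric.infEdist z Vᶜ :=
      lt_of_lt_of_le (ENNReal.inv_pos.2 (by simp)) hz.2
    have := EMetric.infEdist_pos_iff_notMem_closure.1 hpos
    rw [hV.isClosed_compl.closure_eq] at this
    simpa using this
  have hcover : V ⊆ ⋃ k, K k := by
    intro z hz
    have hnot : z ∉ closure Vᶜ := by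
      rw [hV.isClosed_compl.closure_eq]; simpa using hz
    have hpos : (0 : ℝ≥0∞) < EMetric.infEdist z Vᶜ :=
      EMetric.infEdist_pos_iff_notMem_closure.2 hnot
    obtain ⟨k₁, hk₁⟩ := ENNReal.exists_inv_nat_lt (ne_of_gt hpos)
    obtain ⟨k₂, hk₂⟩ := exists_nat_ge ‖z‖
    refine mem_iUnion.2 ⟨max k₁ k₂, ?_, ?_⟩
    · rw [mem_closedBall_zero_iff]
      exact le_trans hk₂ (by exact_mod_cast le_max_right k₁ k₂)
    · refine le_trans ?_ (le_of_lt hk₁)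
      apply ENNReal.inv_le_inv.2
      have : (k₁ : ℝ≥0∞) ≤ (max k₁ k₂ : ℕ) := by exact_mod_cast le_max_left k₁ k₂
      exact le_trans this (le_self_add)
  set S : ℕ → ℕ → Set ((Fin σ → ℝ) × (Fin n → Fin d → ℝ)) := fun k r =>
    {p | p ∈ (K k) ×ˢ Metric.closedBall 0 r ∧ (fun i => f (p.1, p.2 i)) ∈ ({0} : Set (Fin n → ℝ))}
    with hSdef
  have hScomp : ∀ k r, IsCompact (S k r) := by
    intro k r
    have hclosed : IsClosed (S k r) := by
      apply isClosed_setOf_mem_and (O := V ×ˢ (univ : Set (Fin n → Fin d → ℝ)))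
        (((hKc k).isClosed).prod Metric.isClosed_closedBall) (hV.prod isOpen_univ)
        (prod_mono (hKV k) (subset_univ _)) ?_ isClosed_singleton
      rw [continuousOn_pi]
      intro i
      apply hf.comp (Continuous.continuousOn (by fun_prop))
      rintro ⟨z, x⟩ ⟨hzV, -⟩
      exact ⟨hzV, trivial⟩
    exact IsCompact.of_isClosed_subset (((hKc k).prod (isCompact_closedBall _ _)))
      hclosed (fun p hp => hp.1)
  have hBeq : {x : Fin n → Fin d → ℝ | ∃ z ∈ V, ∀ i, f (z, x i) = 0}
      = ⋃ k, ⋃ r, Prod.snd '' (S k r) := by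
    ext x
    constructor
    · rintro ⟨z, hzV, hzero⟩
      obtain ⟨k, hk⟩ := mem_iUnion.1 (hcover hzV)
      obtain ⟨r, hr⟩ := exists_nat_ge ‖x‖
      refine mem_iUnion.2 ⟨k, mem_iUnion.2 ⟨r, ⟨(z, x), ⟨⟨hk, ?_⟩, ?_⟩, rfl⟩⟩⟩
      · rw [Metric.mem_closedBall, dist_zero_right]; exact hr
      · funext i; exact hzero i
    · rintro ⟨_, ⟨k, rfl⟩, _, ⟨r, rfl⟩, ⟨z, x'⟩, ⟨⟨hzK, -⟩, hzero⟩, rfl⟩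
      exact ⟨z, hKV k hzK, fun i => congrFun hzero i⟩
  rw [hBeq]
  exact MeasurableSet.iUnion fun k => MeasurableSet.iUnion fun r =>
    (((hScomp k r).image continuous_snd).measurableSet)

lemma exists_countable_dense_subset_open {V : Set (Fin σ → ℝ)} :
    ∃ Q : Set (Fin σ → ℝ), Q.Countable ∧ Q ⊆ V ∧
      ∀ z ∈ V, ∀ ε > (0:ℝ), ∃ q ∈ Q, dist q z < ε := by
  obtain ⟨c, hc, hcd⟩ := TopologicalSpace.exists_countable_dense ↥V
  refine ⟨Subtype.val '' c, hc.image _, by rintro _ ⟨q, -, rfl⟩; exact q.2, ?_⟩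
  intro z hz ε hε
  have hne : (Metric.ball (⟨z, hz⟩ : ↥V) ε).Nonempty := ⟨⟨z, hz⟩, by simpa using hε⟩
  obtain ⟨q, hq1, hq2⟩ := hcd.exists_mem_open Metric.isOpen_ball hne
  refine ⟨q.val, mem_image_of_mem _ hq1, ?_⟩
  have := Metric.mem_ball.1 hq2
  rwa [Subtype.dist_eq] at this

end helpers

/-- Main induction: if `f` is analytic on `U ×ˢ univ` and `n > σ`, then the set of `n`-tuples
of points admitting a common zero `z ∈ U` with `f (z, ·)` not identically zero is null. -/
lemma main_induction (d : ℕ) : ∀ σ : ℕ, ∀ n : ℕ, σ < n →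
    ∀ U : Set (Fin σ → ℝ), IsOpen U →
    ∀ f : (Fin σ → ℝ) × (Fin d → ℝ) → ℝ,
      AnalyticOnNhd ℝ f (U ×ˢ (Set.univ : Set (Fin d → ℝ))) →
    volume {x : Fin n → Fin d → ℝ |
      ∃ z ∈ U, (∃ y, f (z, y) ≠ 0) ∧ ∀ i, f (z, x i) = 0} = 0 := by
  classical
  intro σ
  induction σ with
  | zero =>
    intro n hn U hU f hf
    obtain ⟨m, rfl⟩ : ∃ m, n = m + 1 := ⟨n - 1, by omega⟩
    haveI : Subsingleton (Fin 0 → ℝ) := ⟨fun a b => funext fun i => i.elim0⟩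
    set z₀ : Fin 0 → ℝ := fun i => i.elim0 with hz₀def
    by_cases hgood : z₀ ∈ U ∧ ∃ y, f (z₀, y) ≠ 0
    · obtain ⟨hz₀U, y₀, hy₀⟩ := hgood
      set Z := {y : Fin d → ℝ | f (z₀, y) = 0} with hZ
      have hfa : AnalyticOnNhd ℝ (fun y => f (z₀, y)) univ := slice_x hf hz₀U
      have hZ0 : volume Z = 0 := volume_zeros d _ hfa y₀ hy₀
      have hZm : MeasurableSet Z := by
        have hcont : Continuous (fun y => f (z₀, y)) := by
          have := hfa.continuousOn
          rwa [continuousOn_univ] at this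
        exact (isClosed_singleton.preimage hcont).measurableSet
      apply measure_mono_null ?_ (eval_preimage_null 0 hZm hZ0)
      rintro x ⟨z, hzU, hzy, hzero⟩
      have hz : z = z₀ := Subsingleton.elim _ _
      rw [hz] at hzero
      exact hzero 0
    · have : {x : Fin (m+1) → Fin d → ℝ |
          ∃ z ∈ U, (∃ y, f (z, y) ≠ 0) ∧ ∀ i, f (z, x i) = 0} = ∅ := by
        ext x
        simp only [mem_setOf_eq, mem_empty_iff_false, iff_false]
        rintro ⟨z, hzU, hzy, -⟩
        have hz : z = z₀ := Subsingleton.elim _ _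
        rw [hz] at hzU hzy
        exact hgood ⟨hzU, hzy⟩
      rw [this]
      exact measure_empty
  | succ τ IH =>
    intro n hn U hU f hf
    obtain ⟨m, rfl⟩ : ∃ m, n = m + 1 := ⟨n - 1, by omega⟩
    have hτm : τ < m := by omega
    set V : Set (Fin (τ+1) → ℝ) := {z | z ∈ U ∧ ∃ y, f (z, y) ≠ 0} with hVdef
    have hfc : ContinuousOn f (U ×ˢ (Set.univ : Set (Fin d → ℝ))) := hf.continuousOn
    have hVU : V ⊆ U := fun z hz => hz.1
    have hVo : IsOpen V := by
      rw [isOpen_iff_forall_mem_open]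
      rintro z ⟨hzU, y, hy⟩
      refine ⟨U ∩ (fun z' => f (z', y)) ⁻¹' ({0}ᶜ), ?_, ?_, hzU, by simpa using hy⟩
      · rintro z' ⟨hz'U, hz'⟩
        exact ⟨hz'U, y, by simpa using hz'⟩
      · exact ContinuousOn.isOpen_inter_preimage ((slice_z hf y).continuousOn) hU
          (isOpen_compl_singleton)
    have hBeq : {x : Fin (m+1) → Fin d → ℝ |
        ∃ z ∈ U, (∃ y, f (z, y) ≠ 0) ∧ ∀ i, f (z, x i) = 0}
        = {x | ∃ z ∈ V, ∀ i, f (z, x i) = 0} := by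
      ext x
      constructor
      · rintro ⟨z, hzU, hzy, hzero⟩; exact ⟨z, ⟨hzU, hzy⟩, hzero⟩
      · rintro ⟨z, ⟨hzU, hzy⟩, hzero⟩; exact ⟨z, hzU, hzy, hzero⟩
    rw [hBeq]
    have hBm : MeasurableSet {x : Fin (m+1) → Fin d → ℝ | ∃ z ∈ V, ∀ i, f (z, x i) = 0} :=
      bad_measurable hVo (hfc.mono (prod_mono hVU subset_rfl))
    apply pi_null_of_sections hBm
    obtain ⟨Q, hQc, hQV, hQd⟩ := exists_countable_dense_subset_open (V := V)
    have hN : volume (⋃ q ∈ Q, {y : Fin d → ℝ | f (q, y) = 0}) = 0 := by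
      rw [measure_biUnion_null_iff hQc]
      intro q hq
      obtain ⟨hqU, yq, hyq⟩ := hQV hq
      exact volume_zeros d _ (slice_x hf hqU) yq hyq
    have hae : ∀ᵐ x₁ : Fin d → ℝ, x₁ ∉ ⋃ q ∈ Q, {y : Fin d → ℝ | f (q, y) = 0} := by
      rw [ae_iff]
      apply measure_mono_null ?_ hN
      intro a ha
      simp only [mem_setOf_eq, not_not] at ha
      exact ha
    filter_upwards [hae] with x₁ hx₁
    simp only [mem_iUnion, mem_setOf_eq, not_exists] at hx₁
    set g : (Fin (τ+1) → ℝ) → ℝ := fun z => f (z, x₁) with hgdef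
    have hga : AnalyticOnNhd ℝ g U := slice_z hf x₁
    set Ak : ℕ → Set (Fin (τ+1) → ℝ) := fun k =>
      {z | z ∈ V ∧ iteratedFDeriv ℝ k g z = 0 ∧ iteratedFDeriv ℝ (k+1) g z ≠ 0} with hAkdef
    -- every zero of g in V has finite vanishing order
    have horder : ∀ z ∈ V, g z = 0 → ∃ k, z ∈ Ak k := by
      intro z hzV hz0
      by_cases hall : ∀ k, iteratedFDeriv ℝ k g z = 0
      · exfalso
        obtain ⟨p, r, hp⟩ := hga z (hVU hzV)
        have hballzero : ∀ w ∈ EMetric.ball (0 : Fin (τ+1) → ℝ) r, g (z + w) = 0 := by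
          intro w hw
          have hsum := hp.hasSum_iteratedFDeriv (𝕜 := ℝ) hw
          have hzfun : (fun k => ((k.factorial : ℝ))⁻¹ •
              (iteratedFDeriv ℝ k g z) fun _ => w) = fun _ => (0:ℝ) := by
            funext k
            rw [hall k]
            simp
          rw [hzfun] at hsum
          exact hsum.unique hasSum_zero
        have hev0 : ∀ᶠ w in 𝓝 (0 : Fin (τ+1) → ℝ), g (z + w) = 0 := by
          filter_upwards [EMetric.ball_mem_nhds (0 : Fin (τ+1) → ℝ) hp.r_pos] with w hw
          exact hballzero w hw
        have hsubcont : Filter.Tendsto (fun y : Fin (τ+1) → ℝ => y - z) (𝓝 z)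
            (𝓝 (0 : Fin (τ+1) → ℝ)) := by
          have : Filter.Tendsto (fun y : Fin (τ+1) → ℝ => y - z) (𝓝 z) (𝓝 (z - z)) :=
            (continuous_id.sub continuous_const).tendsto z
          rwa [sub_self] at this
        have hev1 : ∀ᶠ y in 𝓝 z, g y = 0 := by
          filter_upwards [hsubcont.eventually hev0] with y hy
          simpa using hy
        have hev2 : ∀ᶠ y in 𝓝 z, y ∈ V := hVo.mem_nhds hzV
        obtain ⟨ε, hε0, hball⟩ := Metric.eventually_nhds_iff.1 (hev1.and hev2)
        obtain ⟨q, hqQ, hqd⟩ := hQd z hzV ε hε0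
        exact hx₁ q hqQ ((hball hqd).1)
      · push_neg at hall
        have hex : ∃ k, iteratedFDeriv ℝ k g z ≠ 0 := hall
        have hk0 : iteratedFDeriv ℝ (Nat.find hex) g z ≠ 0 := Nat.find_spec hex
        have hk0pos : Nat.find hex ≠ 0 := by
          intro h0
          apply hk0
          rw [h0]
          ext v
          rw [iteratedFDeriv_zero_apply]
          simpa using hz0
        obtain ⟨k1, hk1⟩ : ∃ k1, Nat.find hex = k1 + 1 := ⟨Nat.find hex - 1, by omega⟩
        refine ⟨k1, hzV, ?_, by rw [← hk1]; exact hk0⟩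
        have := Nat.find_min hex (m := k1) (by omega)
        simpa using this
    -- per-stratum null bound, via charts and the induction hypothesis
    have perk : ∀ k : ℕ,
        volume {x' : Fin m → Fin d → ℝ | ∃ z ∈ Ak k, ∀ j, f (z, x' j) = 0} = 0 := by
      intro k
      have key : ∀ z ∈ Ak k, ∃ W : Set (Fin (τ+1) → ℝ), IsOpen W ∧ z ∈ W ∧
          ∃ N : Set (Fin m → Fin d → ℝ), volume N = 0 ∧
            ∀ x' : Fin m → Fin d → ℝ,
              (∃ z' ∈ Ak k, z' ∈ W ∧ ∀ j, f (z', x' j) = 0) → x' ∈ N := by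
        rintro z ⟨hzV, hz1, hz2⟩
        have hvec : ∃ v : Fin (k+1) → (Fin (τ+1) → ℝ), iteratedFDeriv ℝ (k+1) g z v ≠ 0 := by
          by_contra hcon
          push_neg at hcon
          exact hz2 (ContinuousMultilinearMap.ext fun v => by simpa using hcon v)
        obtain ⟨v, hv⟩ := hvec
        set L := ContinuousMultilinearMap.apply ℝ (fun _ : Fin k => (Fin (τ+1) → ℝ)) ℝ
          (Fin.tail v) with hLdef
        set hfun : (Fin (τ+1) → ℝ) → ℝ := fun z' => L (iteratedFDeriv ℝ k g z') with hhfun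
        have hita : AnalyticOnNhd ℝ (iteratedFDeriv ℝ k g) U :=
          hga.iteratedFDeriv_of_isOpen hU k
        have hhana : AnalyticOnNhd ℝ hfun U := L.comp_analyticOnNhd hita
        have hderc : HasFDerivAt hfun (L.comp (fderiv ℝ (iteratedFDeriv ℝ k g) z)) z := by
          have h1 : HasFDerivAt (iteratedFDeriv ℝ k g) (fderiv ℝ (iteratedFDeriv ℝ k g) z) z :=
            ((hita z (hVU hzV)).differentiableAt).hasFDerivAt
          exact L.hasFDerivAt.comp z h1
        have hder : fderiv ℝ hfun z (v 0) = iteratedFDeriv ℝ (k+1) g z v := by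
          rw [hderc.fderiv]
          show L ((fderiv ℝ (iteratedFDeriv ℝ k g) z) (v 0)) = _
          rw [hLdef]
          show ((fderiv ℝ (iteratedFDeriv ℝ k g) z) (v 0)) (Fin.tail v) = _
          rw [← iteratedFDeriv_succ_apply_left]
        have hdne : fderiv ℝ hfun z (v 0) ≠ 0 := by rw [hder]; exact hv
        obtain ⟨W, U', ψ, hWo, hzW, hU'o, hψa, hψsub, hcov⟩ :=
          chart_lemma hVo (hhana.mono hVU) hzV hdne
        set f' : (Fin τ → ℝ) × (Fin d → ℝ) → ℝ := fun p => f (ψ p.1, p.2) with hf'def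
        have hpair : AnalyticOnNhd ℝ (fun p : (Fin τ → ℝ) × (Fin d → ℝ) => (ψ p.1, p.2))
            (U' ×ˢ (Set.univ : Set (Fin d → ℝ))) := by
          apply AnalyticOnNhd.prod
          · exact hψa.comp ((ContinuousLinearMap.fst ℝ (Fin τ → ℝ) (Fin d → ℝ)).analyticOnNhd _)
              (fun p hp => hp.1)
          · exact (ContinuousLinearMap.snd ℝ (Fin τ → ℝ) (Fin d → ℝ)).analyticOnNhd _
        have hf'a : AnalyticOnNhd ℝ f' (U' ×ˢ (Set.univ : Set (Fin d → ℝ))) := by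
          apply hf.comp hpair
          rintro ⟨w, y⟩ ⟨hw, -⟩
          exact ⟨hVU (hψsub (mem_image_of_mem ψ hw)), trivial⟩
        have hN := IH m hτm U' hU'o f' hf'a
        refine ⟨W, hWo, hzW, _, hN, ?_⟩
        rintro x' ⟨z', hz'A, hz'W, hz'x⟩
        have hz'h : hfun z' = 0 := by
          show L (iteratedFDeriv ℝ k g z') = 0
          rw [hz'A.2.1]
          simp
        obtain ⟨w, hwU', hwz⟩ := hcov z' hz'W hz'h
        refine ⟨w, hwU', ?_, fun j => ?_⟩
        · obtain ⟨-, y, hy⟩ := hz'A.1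
          exact ⟨y, by rw [hf'def]; show f (ψ w, y) ≠ 0; rw [hwz]; exact hy⟩
        · show f (ψ w, x' j) = 0
          rw [hwz]
          exact hz'x j
      choose W hWo hzW N hN0 hNprop using key
      rcases eq_empty_or_nonempty (Ak k) with hAe | hAne
      · have : {x' : Fin m → Fin d → ℝ | ∃ z ∈ Ak k, ∀ j, f (z, x' j) = 0} = ∅ := by
          ext x'
          simp only [mem_setOf_eq, mem_empty_iff_false, iff_false]
          rintro ⟨z, hz, -⟩
          rw [hAe] at hz
          exact hz
        rw [this]; exact measure_empty
      · haveI : Nonempty ↥(Ak k) := hAne.to_subtype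
        have hlin : IsLindelof (Ak k) := HereditarilyLindelof_LindelofSets (Ak k)
        obtain ⟨C, hCcov⟩ := hlin.indexed_countable_subcover
          (fun i : ↥(Ak k) => W i.1 i.2) (fun i => hWo i.1 i.2)
          (fun z hz => mem_iUnion.2 ⟨⟨z, hz⟩, hzW z hz⟩)
        have hNull : volume (⋃ n : ℕ, N (C n).1 (C n).2) = 0 :=
          measure_iUnion_null fun n => hN0 (C n).1 (C n).2
        apply measure_mono_null ?_ hNull
        rintro x' ⟨z, hzA, hzx⟩
        obtain ⟨i, hiW⟩ := mem_iUnion.1 (hCcov hzA)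
        exact mem_iUnion.2 ⟨i, hNprop (C i).1 (C i).2 x' ⟨z, hzA, hiW, hzx⟩⟩
    have hsec : {x' : Fin m → Fin d → ℝ |
        ((0 : Fin (m+1)).insertNth x₁ x' : Fin (m+1) → Fin d → ℝ)
          ∈ {x | ∃ z ∈ V, ∀ i, f (z, x i) = 0}}
        ⊆ ⋃ k : ℕ, {x' | ∃ z ∈ Ak k, ∀ j, f (z, x' j) = 0} := by
      rintro x' ⟨z, hzV, hzero⟩
      have hgz : g z = 0 := by
        have := hzero 0
        rwa [Fin.insertNth_apply_same] at this
      obtain ⟨k, hk⟩ := horder z hzV hgz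
      refine mem_iUnion.2 ⟨k, z, hk, fun j => ?_⟩
      have := hzero ((0 : Fin (m+1)).succAbove j)
      rwa [Fin.insertNth_apply_succAbove] at this
    exact measure_mono_null hsec (measure_iUnion_null perk)

open MeasureTheory in
theorem stmt11 (s d : ℕ) (f : ((Fin s → ℝ) × (Fin d → ℝ)) → ℝ)
    (hf : AnalyticOnNhd ℝ f Set.univ) (E : Set (Fin s → ℝ))
    (hE : ∀ z ∈ E, ∃ x, f (z, x) ≠ 0) :
    (∀ᵐ x : Fin d → ℝ, ∃ g : (Fin s → ℝ) → ℝ, AnalyticOnNhd ℝ g Set.univ ∧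
        (∃ z, g z ≠ 0) ∧ ∀ z ∈ E, f (z, x) = 0 → g z = 0) ∧
    ∀ n : ℕ, s < n → ∀ x : Fin n → (Fin d → ℝ), ∀ ε : ℝ, 0 < ε →
      ∃ x' : Fin n → (Fin d → ℝ), (∀ i, dist (x' i) (x i) < ε) ∧
        ∀ z ∈ E, ∃ i, f (z, x' i) ≠ 0 := by
  have hf' : AnalyticOnNhd ℝ f ((Set.univ : Set (Fin s → ℝ)) ×ˢ (Set.univ : Set (Fin d → ℝ))) :=
    hf.mono (subset_univ _)
  constructor
  · -- almost every x admits a nonzero analytic function vanishing on the slice zero set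
    rcases eq_empty_or_nonempty E with rfl | ⟨z₀, hz₀⟩
    · apply Filter.Eventually.of_forall
      intro x
      exact ⟨fun _ => 1, analyticOnNhd_const, ⟨fun _ => 0, one_ne_zero⟩,
        fun z hz => (notMem_empty z hz).elim⟩
    · obtain ⟨y₀, hy₀⟩ := hE z₀ hz₀
      have hfa : AnalyticOnNhd ℝ (fun y => f (z₀, y)) univ := slice_x hf' trivial
      have hZ0 : volume {y : Fin d → ℝ | f (z₀, y) = 0} = 0 := volume_zeros d _ hfa y₀ hy₀
      have hae : ∀ᵐ x : Fin d → ℝ, f (z₀, x) ≠ 0 := by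
        rw [ae_iff]
        simpa using hZ0
      filter_upwards [hae] with x hx
      exact ⟨fun z => f (z, x), slice_z hf' x, ⟨z₀, hx⟩, fun z _ h0 => h0⟩
  · -- perturbation part
    intro n hn x ε hε
    have hnull := main_induction d s n hn univ isOpen_univ f hf'
    set Box : Set (Fin n → Fin d → ℝ) := {x' | ∀ i, x' i ∈ Metric.ball (x i) ε} with hBoxdef
    have hBox : Box = Set.pi univ (fun i => Metric.ball (x i) ε) := by
      ext x'
      simp [hBoxdef, Set.mem_pi]
    have hBoxvol : volume Box ≠ 0 := by
      rw [hBox, volume_pi_pi]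
      apply ne_of_gt
      rw [CanonicallyOrderedAdd.prod_pos]
      intro i _
      exact Metric.measure_ball_pos volume (x i) hε
    obtain ⟨x', hx'B, hx'n⟩ : ∃ x', x' ∈ Box ∧
        x' ∉ {x' : Fin n → Fin d → ℝ | ∃ z ∈ (univ : Set (Fin s → ℝ)),
          (∃ y, f (z, y) ≠ 0) ∧ ∀ i, f (z, x' i) = 0} := by
      by_contra hcon
      push_neg at hcon
      exact hBoxvol (measure_mono_null hcon hnull)
    refine ⟨x', fun i => ?_, ?_⟩
    · have := hx'B i
      rwa [Metric.mem_ball] at this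
    · intro z hz
      by_contra hcon
      push_neg at hcon
      exact hx'n ⟨z, trivial, hE z hz, fun i => hcon i⟩
end

section
/- Let y : [T, ∞) → ℝ be C^1 with y(t) → 0, and suppose there are λ > 0 and D_1, μ_1 > 0 such that |ẏ(t)| ≥ (λ/2)|y(t)| and |y(ζ)| ≥ D_1 |y(t)| e^{−μ_1(ζ−t)} for all ζ ≥ t > T, with y monotone of constant sign on (T,∞). Then there is a constant C > 0 such that ∫_t^∞ y(ζ)^2 dζ ≤ C y(t)^2 for all t > T. -/
open MeasureTheory in
theorem stmt18 (T : ℝ) (y : ℝ → ℝ) (hy : ContDiffOn ℝ 1 y (Set.Ioi T))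
    (hlim : Filter.Tendsto y Filter.atTop (nhds 0))
    (lam : ℝ) (hlam : 0 < lam)
    (hder : ∀ t ∈ Set.Ioi T, lam / 2 * |y t| ≤ |deriv y t|)
    (D₁ μ₁ : ℝ) (hD₁ : 0 < D₁) (hμ₁ : 0 < μ₁)
    (hexp : ∀ t ζ : ℝ, T < t → t ≤ ζ → D₁ * |y t| * Real.exp (-μ₁ * (ζ - t)) ≤ |y ζ|)
    (hmono : MonotoneOn y (Set.Ioi T) ∨ AntitoneOn y (Set.Ioi T))
    (hsign : (∀ t ∈ Set.Ioi T, 0 ≤ y t) ∨ (∀ t ∈ Set.Ioi T, y t ≤ 0)) :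
    ∃ C : ℝ, 0 < C ∧ ∀ t : ℝ, T < t → ∫ ζ in Set.Ioi t, (y ζ) ^ 2 ≤ C * (y t) ^ 2 := by
  have hopen : IsOpen (Set.Ioi T) := isOpen_Ioi
  have hdiff : ∀ s ∈ Set.Ioi T, HasDerivAt y (deriv y s) s := by
    intro s hs
    have : DifferentiableAt ℝ y s :=
      ((hy.contDiffAt (hopen.mem_nhds hs)).differentiableAt one_ne_zero)
    exact this.hasDerivAt
  -- derivative continuous on Ioi T
  have hderC : ContinuousOn (deriv y) (Set.Ioi T) := by
    exact hy.continuousOn_deriv_of_isOpen hopen le_rfl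
  -- key sign fact : y s * deriv y s ≤ 0 on Ioi T
  have hkeysign : ∀ s ∈ Set.Ioi T, y s * deriv y s ≤ 0 := by
    rcases hmono with hm | hm
    · -- monotone ⇒ y ≤ 0 and deriv ≥ 0
      intro s hs
      have hy0 : y s ≤ 0 := by
        refine ge_of_tendsto hlim ?_
        filter_upwards [Filter.eventually_ge_atTop s] with ζ hζ
        exact hm hs (lt_of_lt_of_le hs hζ) hζ
      have hd0 : 0 ≤ deriv y s := by
        have hslope : Filter.Tendsto (slope y s) (nhdsWithin s {s}ᶜ) (nhds (deriv y s)) :=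
          hasDerivAt_iff_tendsto_slope.mp (hdiff s hs)
        have h2 : Filter.Tendsto (slope y s) (nhdsWithin s (Set.Ioi s)) (nhds (deriv y s)) :=
          hslope.mono_left (nhdsWithin_mono _ (fun x hx => ne_of_gt hx))
        refine ge_of_tendsto h2 ?_
        filter_upwards [self_mem_nhdsWithin] with ζ (hζ : s < ζ)
        have : y s ≤ y ζ := hm hs (lt_trans hs hζ) hζ.le
        have hpos : 0 < ζ - s := sub_pos.mpr hζ
        rw [slope_def_field]
        exact div_nonneg (by linarith) hpos.le
      exact mul_nonpos_of_nonpos_of_nonneg hy0 hd0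
    · -- antitone ⇒ y ≥ 0 and deriv ≤ 0
      intro s hs
      have hy0 : 0 ≤ y s := by
        refine le_of_tendsto hlim ?_
        filter_upwards [Filter.eventually_ge_atTop s] with ζ hζ
        exact hm hs (lt_of_lt_of_le hs hζ) hζ
      have hd0 : deriv y s ≤ 0 := by
        have hslope : Filter.Tendsto (slope y s) (nhdsWithin s {s}ᶜ) (nhds (deriv y s)) :=
          hasDerivAt_iff_tendsto_slope.mp (hdiff s hs)
        have h2 : Filter.Tendsto (slope y s) (nhdsWithin s (Set.Ioi s)) (nhds (deriv y s)) :=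
          hslope.mono_left (nhdsWithin_mono _ (fun x hx => ne_of_gt hx))
        refine le_of_tendsto h2 ?_
        filter_upwards [self_mem_nhdsWithin] with ζ (hζ : s < ζ)
        have : y ζ ≤ y s := hm hs (lt_trans hs hζ) hζ.le
        have hpos : 0 < ζ - s := sub_pos.mpr hζ
        rw [slope_def_field]
        exact div_nonpos_of_nonpos_of_nonneg (by linarith) hpos.le
      exact mul_nonpos_of_nonneg_of_nonpos hy0 hd0
  -- pointwise estimate : lam * y² ≤ -(2 y y')
  have hpt : ∀ s ∈ Set.Ioi T, lam * (y s) ^ 2 ≤ -(2 * y s * deriv y s) := by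
    intro s hs
    have h1 := hder s hs
    have h2 := hkeysign s hs
    have h3 : lam / 2 * |y s| * |y s| ≤ |deriv y s| * |y s| :=
      mul_le_mul_of_nonneg_right h1 (abs_nonneg _)
    have h4 : |deriv y s| * |y s| = |y s * deriv y s| := by
      rw [abs_mul]; ring
    have h5 : |y s * deriv y s| = -(y s * deriv y s) := abs_of_nonpos h2
    have h6 : lam / 2 * |y s| * |y s| = lam / 2 * (y s) ^ 2 := by
      rw [mul_assoc, ← abs_mul, ← sq, abs_sq]
    nlinarith [h3, h4, h5, h6]
  refine ⟨1 / lam, by positivity, fun t ht => ?_⟩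
  -- continuity of y on Ioi T
  have hyc : ContinuousOn y (Set.Ioi T) := hy.continuousOn
  -- finite interval bound
  have hIcc : ∀ b : ℝ, t ≤ b → Set.uIcc t b ⊆ Set.Ioi T := by
    intro b hb
    rw [Set.uIcc_of_le hb]
    exact fun x hx => lt_of_lt_of_le ht hx.1
  have hderivsq : ∀ b, t ≤ b → ∀ x ∈ Set.uIcc t b,
      HasDerivAt (fun u => (y u) ^ 2) (2 * y x * deriv y x) x := by
    intro b hb x hx
    have hx' : x ∈ Set.Ioi T := hIcc b hb hx
    have := (hdiff x hx').fun_pow 2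
    simpa [mul_comm, mul_assoc, mul_left_comm] using this
  have hcontF' : ∀ b, t ≤ b → ContinuousOn (fun x => 2 * y x * deriv y x) (Set.uIcc t b) := by
    intro b hb
    exact (continuousOn_const.mul (hyc.mono (hIcc b hb))).mul (hderC.mono (hIcc b hb))
  have hintF' : ∀ b, t ≤ b → IntervalIntegrable (fun x => 2 * y x * deriv y x)
      MeasureTheory.volume t b := by
    intro b hb
    exact (hcontF' b hb).intervalIntegrable
  have hinty2 : ∀ b, t ≤ b → IntervalIntegrable (fun x => (y x) ^ 2)
      MeasureTheory.volume t b := by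
    intro b hb
    exact ((hyc.mono (hIcc b hb)).pow 2).intervalIntegrable
  have hbound : ∀ b : ℝ, t ≤ b → (∫ x in t..b, (y x) ^ 2) ≤ (y t) ^ 2 / lam := by
    intro b hb
    have hftc : (∫ x in t..b, 2 * y x * deriv y x) = (y b) ^ 2 - (y t) ^ 2 :=
      intervalIntegral.integral_eq_sub_of_hasDerivAt (hderivsq b hb) (hintF' b hb)
    have hmono' : (∫ x in t..b, lam * (y x) ^ 2) ≤ ∫ x in t..b, -(2 * y x * deriv y x) := by
      apply intervalIntegral.integral_mono_on hb
      · exact (hinty2 b hb).const_mul lam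
      · exact (hintF' b hb).neg
      · intro x hx
        exact hpt x (lt_of_lt_of_le ht hx.1)
    rw [intervalIntegral.integral_neg, hftc] at hmono'
    rw [intervalIntegral.integral_const_mul] at hmono'
    have hyb : 0 ≤ (y b) ^ 2 := sq_nonneg _
    rw [le_div_iff₀ hlam, mul_comm]
    linarith
  -- integrability on Ioi t
  have hintIoi : MeasureTheory.IntegrableOn (fun x => (y x) ^ 2) (Set.Ioi t) := by
    apply MeasureTheory.integrableOn_Ioi_of_intervalIntegral_norm_bounded
      ((y t) ^ 2 / lam) t (b := fun n : ℕ => t + n) (l := Filter.atTop)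
    · intro n
      exact ((hinty2 (t + n) (by linarith [Nat.cast_nonneg (α := ℝ) n])).1)
    · exact Filter.tendsto_atTop_add_const_left _ _ (tendsto_natCast_atTop_atTop)
    · filter_upwards with n
      have hb : t ≤ t + n := by linarith [Nat.cast_nonneg (α := ℝ) n]
      have := hbound (t + n) hb
      calc (∫ x in t..t + n, ‖(y x) ^ 2‖) = ∫ x in t..t + n, (y x) ^ 2 := by
            congr 1; ext x; exact Real.norm_of_nonneg (sq_nonneg _)
        _ ≤ (y t) ^ 2 / lam := this
  -- pass to the limit
  have htend : Filter.Tendsto (fun n : ℕ => ∫ x in t..t + n, (y x) ^ 2) Filter.atTop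
      (nhds (∫ ζ in Set.Ioi t, (y ζ) ^ 2)) := by
    apply MeasureTheory.intervalIntegral_tendsto_integral_Ioi t hintIoi
    exact Filter.tendsto_atTop_add_const_left _ _ (tendsto_natCast_atTop_atTop)
  have hfin : (∫ ζ in Set.Ioi t, (y ζ) ^ 2) ≤ (y t) ^ 2 / lam := by
    refine le_of_tendsto htend ?_
    filter_upwards with n
    exact hbound (t + n) (by linarith [Nat.cast_nonneg (α := ℝ) n])
  calc (∫ ζ in Set.Ioi t, (y ζ) ^ 2) ≤ (y t) ^ 2 / lam := hfin
    _ = 1 / lam * (y t) ^ 2 := by ring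
end
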